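/- arXiv:2101.00684 — 2 statements merged into one kernel-verified Lean document; each statement's English description precedes it below -/
import Mathlib

section
/- Let N be an even integer with N > 2μ. Then the inverse of T_N(μ) satisfies: ‖T_N(μ)⁻¹‖₁ ≤ 0.806 + 1/20 if μ > 10; ‖T_N(μ)⁻¹‖₁ ≤ 0.736 + 1/200 if μ > 100; and ‖T_N(μ)⁻¹‖₁ ≤ 0.727 + 1/2000 if μ > 1000. The bounds are uniform with respect to the even approximation dimension N. -/
/-- The `N × N` tridiagonal matrix `T_N(μ)` with diagonal `2, 4, …, 2N`, subdiagonal `μ`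
and superdiagonal `-μ` (0-based indexing). -/
noncomputable def Tmat (N : ℕ) (μ : ℝ) : Matrix (Fin N) (Fin N) ℝ :=
  Matrix.of fun i j =>
    if (i : ℕ) = (j : ℕ) then 2 * (((i : ℕ) : ℝ) + 1)
    else if (i : ℕ) = (j : ℕ) + 1 then μ
    else if (j : ℕ) = (i : ℕ) + 1 then -μ
    else 0

/-- The matrix norm induced by the `‖·‖₁` vector norm: the maximum over columns of the
sum of absolute values of the entries of the column. -/
noncomputable def mat1norm {m n : ℕ} (A : Matrix (Fin m) (Fin n) ℝ) : ℝ :=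
  ⨆ l : Fin n, ∑ i : Fin m, |A i l|

set_option linter.unusedVariables false

/-- zero-padded 1-based extension of a vector -/
noncomputable def ext (N : ℕ) (v : Fin N → ℝ) : ℕ → ℝ :=
  fun n => if h : 1 ≤ n ∧ n ≤ N then v ⟨n-1, by omega⟩ else 0

lemma ext_zero (N : ℕ) (v : Fin N → ℝ) (n : ℕ) (h : n = 0 ∨ N < n) : ext N v n = 0 := by
  unfold ext; rw [dif_neg]; omega

lemma ext_val (N : ℕ) (v : Fin N → ℝ) (n : ℕ) (h1 : 1 ≤ n) (h2 : n ≤ N) :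
    ext N v n = v ⟨n-1, by omega⟩ := by
  unfold ext; rw [dif_pos ⟨h1, h2⟩]

lemma Tmat_mulVec_eq (N : ℕ) (μ : ℝ) (v : Fin N → ℝ) (i : Fin N) :
    (Tmat N μ).mulVec v i
      = (if h : 1 ≤ (i:ℕ) then μ * v ⟨(i:ℕ)-1, by omega⟩ else 0)
        + 2*(((i:ℕ):ℝ)+1)*v i
        + (if h : (i:ℕ)+1 < N then (-μ) * v ⟨(i:ℕ)+1, h⟩ else 0) := by
  classical
  rw [Matrix.mulVec, dotProduct]
  have hsplit : ∀ j : Fin N, Tmat N μ i j * v j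
      = (if j = i then 2*(((i:ℕ):ℝ)+1)*v j else 0)
        + (if (i:ℕ) = (j:ℕ)+1 then μ*v j else 0)
        + (if (j:ℕ) = (i:ℕ)+1 then (-μ)*v j else 0) := by
    intro j
    simp only [Tmat, Matrix.of_apply]
    by_cases h1 : (i:ℕ) = (j:ℕ)
    · have hj : j = i := by exact Fin.ext h1.symm
      rw [if_pos h1, if_pos hj, if_neg (by omega), if_neg (by omega)]
      subst hj; ring
    · have hji : ¬ j = i := fun h => h1 (by rw [h])
      rw [if_neg h1, if_neg hji]
      by_cases h2 : (i:ℕ) = (j:ℕ)+1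
      · rw [if_pos h2, if_pos h2, if_neg (by omega)]; ring
      · rw [if_neg h2, if_neg h2]
        by_cases h3 : (j:ℕ) = (i:ℕ)+1
        · rw [if_pos h3, if_pos h3]; ring
        · rw [if_neg h3, if_neg h3]; ring
  rw [Finset.sum_congr rfl (fun j _ => hsplit j)]
  rw [Finset.sum_add_distrib, Finset.sum_add_distrib]
  have s1 : ∑ j : Fin N, (if j = i then 2*(((i:ℕ):ℝ)+1)*v j else 0) = 2*(((i:ℕ):ℝ)+1)*v i := by
    rw [Finset.sum_ite_eq' Finset.univ i (fun j => 2*(((i:ℕ):ℝ)+1)*v j)]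
    simp
  have s2 : ∑ j : Fin N, (if (i:ℕ) = (j:ℕ)+1 then μ*v j else 0)
      = (if h : 1 ≤ (i:ℕ) then μ * v ⟨(i:ℕ)-1, by omega⟩ else 0) := by
    by_cases hi : 1 ≤ (i:ℕ)
    · rw [dif_pos hi]
      have hlt : (i:ℕ) - 1 < N := by have := i.isLt; omega
      rw [Finset.sum_eq_single (⟨(i:ℕ)-1, hlt⟩ : Fin N)]
      · rw [if_pos (by simp; omega)]
      · intro b _ hb
        rw [if_neg]
        intro hc
        apply hb
        apply Fin.ext
        simp only []
        omega
      · intro h; exact absurd (Finset.mem_univ _) h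
    · rw [dif_neg hi]
      apply Finset.sum_eq_zero
      intro j _
      rw [if_neg (by omega)]
  have s3 : ∑ j : Fin N, (if (j:ℕ) = (i:ℕ)+1 then (-μ)*v j else 0)
      = (if h : (i:ℕ)+1 < N then (-μ) * v ⟨(i:ℕ)+1, h⟩ else 0) := by
    by_cases hi : (i:ℕ)+1 < N
    · rw [dif_pos hi]
      rw [Finset.sum_eq_single (⟨(i:ℕ)+1, hi⟩ : Fin N)]
      · rw [if_pos (by simp)]
      · intro b _ hb
        rw [if_neg]
        intro hc
        apply hb
        apply Fin.ext
        simpa using hc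
      · intro h; exact absurd (Finset.mem_univ _) h
    · rw [dif_neg hi]
      apply Finset.sum_eq_zero
      intro j _
      rw [if_neg (by have := j.isLt; omega)]
  rw [s1, s2, s3]; ring

/-- The key recurrence for the zero-padded extension. -/
lemma ext_rec (N : ℕ) (μ : ℝ) (v w : Fin N → ℝ) (hv : (Tmat N μ).mulVec v = w)
    (n : ℕ) (h1 : 1 ≤ n) (h2 : n ≤ N) :
    μ * ext N v (n-1) + 2*(n:ℝ)*ext N v n - μ*ext N v (n+1) = w ⟨n-1, by omega⟩ := by
  have hkey := Tmat_mulVec_eq N μ v ⟨n-1, by omega⟩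
  rw [hv] at hkey
  have e0 : ext N v n = v ⟨n-1, by omega⟩ := ext_val N v n h1 h2
  have key2 : w ⟨n-1, by omega⟩
      = (if h : 1 ≤ n-1 then μ * v ⟨(n-1)-1, by omega⟩ else 0)
        + 2*(((n-1:ℕ):ℝ)+1)*v ⟨n-1, by omega⟩
        + (if h : (n-1)+1 < N then (-μ) * v ⟨(n-1)+1, h⟩ else 0) := hkey
  have e1 : μ * ext N v (n-1) = (if h : 1 ≤ n-1 then μ * v ⟨(n-1)-1, by omega⟩ else 0) := by
    by_cases h : 1 ≤ n - 1
    · rw [dif_pos h, ext_val N v (n-1) h (by omega)]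
    · rw [dif_neg h, ext_zero N v (n-1) (by omega), mul_zero]
  have e2 : -(μ*ext N v (n+1)) = (if h : (n-1)+1 < N then (-μ) * v ⟨(n-1)+1, h⟩ else 0) := by
    by_cases h : (n-1)+1 < N
    · rw [dif_pos h, ext_val N v (n+1) (by omega) (by omega)]
      have h3 : (⟨n+1-1, by omega⟩ : Fin N) = ⟨(n-1)+1, h⟩ := by
        apply Fin.ext; simp; omega
      rw [h3]; ring
    · rw [dif_neg h, ext_zero N v (n+1) (by omega), mul_zero, neg_zero]
  rw [← e1, ← e2, ← e0] at key2
  have hn : ((n:ℝ)) = ((n-1 : ℕ) : ℝ) + 1 := by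
    have : n - 1 + 1 = n := by omega
    calc ((n:ℝ)) = (((n-1)+1 : ℕ) : ℝ) := by rw [this]
    _ = ((n-1 : ℕ) : ℝ) + 1 := by push_cast; ring
  rw [hn]; linarith [key2]


lemma abs_sub_of_mul_nonpos {a b : ℝ} (h : a*b ≤ 0) : |a - b| = |a| + |b| := by
  rcases le_or_gt a 0 with ha|ha <;> rcases le_or_gt b 0 with hb|hb
  · have h0 : a*b = 0 := by nlinarith [mul_nonneg (neg_nonneg.2 ha) (neg_nonneg.2 hb)]
    rcases mul_eq_zero.mp h0 with h'|h' <;> simp [h', abs_neg]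
  · rw [abs_of_nonpos (by linarith), abs_of_nonpos ha, abs_of_pos hb]; ring
  · rw [abs_of_nonneg (by linarith), abs_of_pos ha, abs_of_nonpos hb]; ring
  · exfalso; nlinarith

lemma le_of_sq_le_sq' {t q : ℝ} (h0 : 0 ≤ t) (hq : 0 ≤ q) (h : t^2 ≤ q^2) : t ≤ q := by
  nlinarith

lemma shift_sum (f : ℕ → ℝ) : ∀ M : ℕ, ∑ n ∈ Finset.Icc 1 M, f n * f (n-1)
    = ∑ n ∈ Finset.Icc 1 M, f n * f (n+1) - f M * f (M+1) + f 1 * f 0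
  | 0 => by simp; ring
  | (M+1) => by
    rw [Finset.sum_Icc_succ_top (by omega : 1 ≤ M+1), Finset.sum_Icc_succ_top (by omega : 1 ≤ M+1),
      shift_sum f M]
    have h : M + 1 - 1 = M := by omega
    rw [h]; ring

lemma energy_general {μ : ℝ} {N : ℕ} {X : ℕ → ℝ} (r : ℕ → ℝ)
    (hX0 : X 0 = 0) (hXN : ∀ n, N < n → X n = 0)
    (heqr : ∀ n, 1 ≤ n → n ≤ N → μ * X (n-1) + 2*(n:ℝ)*X n - μ*X (n+1) = r n) :
    ∑ n ∈ Finset.Icc 1 N, 2*(n:ℝ)*(X n)^2 = ∑ n ∈ Finset.Icc 1 N, X n * r n := by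
  have h1 : ∀ n ∈ Finset.Icc 1 N, X n * r n
      = μ*(X n * X (n-1)) + 2*(n:ℝ)*(X n)^2 - μ*(X n * X (n+1)) := by
    intro n hn
    rw [Finset.mem_Icc] at hn
    rw [← heqr n hn.1 hn.2]; ring
  rw [Finset.sum_congr rfl h1]
  have h2 : ∑ n ∈ Finset.Icc 1 N, (μ*(X n * X (n-1)) + 2*(n:ℝ)*(X n)^2 - μ*(X n * X (n+1)))
      = μ * (∑ n ∈ Finset.Icc 1 N, X n * X (n-1)) + ∑ n ∈ Finset.Icc 1 N, 2*(n:ℝ)*(X n)^2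
        - μ * (∑ n ∈ Finset.Icc 1 N, X n * X (n+1)) := by
    rw [Finset.mul_sum, Finset.mul_sum, ← Finset.sum_add_distrib, ← Finset.sum_sub_distrib]
  rw [h2, shift_sum X N, hX0, hXN (N+1) (by omega)]
  ring


lemma sum_range_shift (f : ℕ → ℝ) : ∀ M : ℕ,
    ∑ n ∈ Finset.range M, f (n+1) = ∑ n ∈ Finset.Icc 1 M, f n
  | 0 => by simp
  | (M+1) => by
    rw [Finset.sum_range_succ, Finset.sum_Icc_succ_top (by omega : 1 ≤ M+1),
      sum_range_shift f M]

set_option linter.unusedSectionVars false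
set_option linter.unusedVariables false

section Core

variable {μ : ℝ} {N L : ℕ} {X : ℕ → ℝ}
  (hμ : 10 < μ) (hNμ : 2*μ < (N:ℝ)) (hL1 : 1 ≤ L) (hLN : L ≤ N)
  (hX0 : X 0 = 0) (hXN : ∀ n, N < n → X n = 0)
  (heq : ∀ n, 1 ≤ n → n ≤ N → μ * X (n-1) + 2*(n:ℝ)*X n - μ*X (n+1) = if n = L then 1 else 0)

section withheq
include hμ hL1 hLN hX0 hXN heq

lemma energy : ∑ n ∈ Finset.Icc 1 N, 2*(n:ℝ)*(X n)^2 = X L := by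
  rw [energy_general (fun n => if n = L then (1:ℝ) else 0) hX0 hXN heq]
  have h1 : ∀ n ∈ Finset.Icc 1 N, X n * (if n = L then (1:ℝ) else 0)
      = if n = L then X n else 0 := by
    intro n _; by_cases h : n = L <;> simp [h]
  rw [Finset.sum_congr rfl h1, Finset.sum_ite_eq' (Finset.Icc 1 N) L X,
    if_pos (Finset.mem_Icc.mpr ⟨hL1, hLN⟩)]

lemma XL_nonneg : 0 ≤ X L := by
  rw [← energy hμ hL1 hLN hX0 hXN heq]
  apply Finset.sum_nonneg
  intro n hn
  rw [Finset.mem_Icc] at hn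
  positivity

lemma XL_pos : 0 < X L := by
  rcases lt_or_eq_of_le (XL_nonneg hμ hL1 hLN hX0 hXN heq) with h|h
  · exact h
  · exfalso
    have hz : ∀ n ∈ Finset.Icc 1 N, 2*(n:ℝ)*(X n)^2 = 0 := by
      rw [← Finset.sum_eq_zero_iff_of_nonneg]
      · rw [energy hμ hL1 hLN hX0 hXN heq, ← h]
      · intro n hn; rw [Finset.mem_Icc] at hn; positivity
    have hzero : ∀ n, n ≤ N → X n = 0 := by
      intro n hn
      rcases Nat.eq_zero_or_pos n with h0|h0
      · rw [h0]; exact hX0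
      · have := hz n (Finset.mem_Icc.mpr ⟨h0, hn⟩)
        have hn0 : (0:ℝ) < 2*(n:ℝ) := by positivity
        have h2 : (X n)^2 = 0 := le_antisymm (by nlinarith [sq_nonneg (X n)]) (sq_nonneg _)
        exact pow_eq_zero_iff two_ne_zero |>.mp h2
    have hrow := heq L hL1 hLN
    rw [if_pos rfl] at hrow
    have e1 : X (L-1) = 0 := hzero (L-1) (by omega)
    have e2 : X L = 0 := hzero L hLN
    have e3 : X (L+1) = 0 := by
      rcases Nat.lt_or_ge N (L+1) with h'|h'
      · exact hXN _ h'
      · exact hzero _ h'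
    rw [e1, e2, e3] at hrow
    norm_num at hrow

lemma term_bound (n : ℕ) (h1 : 1 ≤ n) : 2*(n:ℝ)*(X n)^2 ≤ X L := by
  rcases Nat.lt_or_ge N n with h|h
  · rw [hXN n h]; simpa using XL_nonneg hμ hL1 hLN hX0 hXN heq
  · rw [← energy hμ hL1 hLN hX0 hXN heq]
    exact Finset.single_le_sum (f := fun m : ℕ => 2*(m:ℝ)*(X m)^2)
      (fun m hm => by rw [Finset.mem_Icc] at hm; positivity)
      (Finset.mem_Icc.mpr ⟨h1, h⟩)

lemma XL2 : 2*(L:ℝ)*X L ≤ 1 := by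
  have h := term_bound hμ hL1 hLN hX0 hXN heq L hL1
  have hXL := XL_pos hμ hL1 hLN hX0 hXN heq
  nlinarith

lemma sumsq_low : 2 * ∑ n ∈ Finset.Icc 1 L, (X n)^2 ≤ X L := by
  have h1 : ∀ n ∈ Finset.Icc 1 L, 2*(X n)^2 ≤ 2*(n:ℝ)*(X n)^2 := by
    intro n hn; rw [Finset.mem_Icc] at hn
    have : (1:ℝ) ≤ (n:ℝ) := by exact_mod_cast hn.1
    nlinarith [sq_nonneg (X n)]
  calc 2 * ∑ n ∈ Finset.Icc 1 L, (X n)^2 = ∑ n ∈ Finset.Icc 1 L, 2*(X n)^2 := by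
        rw [Finset.mul_sum]
    _ ≤ ∑ n ∈ Finset.Icc 1 L, 2*(n:ℝ)*(X n)^2 := Finset.sum_le_sum h1
    _ ≤ ∑ n ∈ Finset.Icc 1 N, 2*(n:ℝ)*(X n)^2 := by
        apply Finset.sum_le_sum_of_subset_of_nonneg
        · exact Finset.Icc_subset_Icc_right hLN
        · intro n hn _; rw [Finset.mem_Icc] at hn; positivity
    _ = X L := energy hμ hL1 hLN hX0 hXN heq

lemma sumsq_mid (K : ℕ) : 2*((L:ℝ)+1) * ∑ n ∈ Finset.Ioc L K, (X n)^2 ≤ X L := by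
  have h1 : ∀ n ∈ Finset.Ioc L K, 2*((L:ℝ)+1)*(X n)^2 ≤ 2*(n:ℝ)*(X n)^2 := by
    intro n hn; rw [Finset.mem_Ioc] at hn
    have : ((L:ℝ)+1) ≤ (n:ℝ) := by exact_mod_cast hn.1
    nlinarith [sq_nonneg (X n)]
  have h2 : ∑ n ∈ Finset.Ioc L K, 2*(n:ℝ)*(X n)^2
      = ∑ n ∈ (Finset.Ioc L K).filter (· ≤ N), 2*(n:ℝ)*(X n)^2 := by
    symm
    apply Finset.sum_subset (Finset.filter_subset _ _)
    intro n hn hn'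
    have : N < n := by
      simp only [Finset.mem_filter] at hn'
      by_contra hc
      exact hn' ⟨hn, by omega⟩
    rw [hXN n this]; ring
  calc 2*((L:ℝ)+1) * ∑ n ∈ Finset.Ioc L K, (X n)^2
      = ∑ n ∈ Finset.Ioc L K, 2*((L:ℝ)+1)*(X n)^2 := by rw [Finset.mul_sum]
    _ ≤ ∑ n ∈ Finset.Ioc L K, 2*(n:ℝ)*(X n)^2 := Finset.sum_le_sum h1
    _ = ∑ n ∈ (Finset.Ioc L K).filter (· ≤ N), 2*(n:ℝ)*(X n)^2 := h2
    _ ≤ ∑ n ∈ Finset.Icc 1 N, 2*(n:ℝ)*(X n)^2 := by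
        apply Finset.sum_le_sum_of_subset_of_nonneg
        · intro n hn
          simp only [Finset.mem_filter, Finset.mem_Ioc] at hn
          rw [Finset.mem_Icc]; omega
        · intro n hn _; rw [Finset.mem_Icc] at hn; positivity
    _ = X L := energy hμ hL1 hLN hX0 hXN heq

lemma alt_aux : ∀ k i, N ≤ i + k → L ≤ i → X i * X (i+1) ≤ 0 := by
  intro k
  induction k with
  | zero =>
    intro i hik _
    rw [hXN (i+1) (by omega)]; simp
  | succ k ih =>
    intro i hik hLi
    rcases Nat.lt_or_ge i N with hiN|hiN
    · have hrow := heq (i+1) (by omega) (by omega)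
      rw [if_neg (by omega)] at hrow
      have hih := ih (i+1) (by omega) (by omega)
      have hcast : ((i+1:ℕ):ℝ) = (i:ℝ)+1 := by push_cast; ring
      rw [hcast] at hrow
      have hsimp : (i+1) - 1 = i := by omega
      rw [hsimp] at hrow
      have hμ0 : (0:ℝ) < μ := by linarith
      have hkey : μ * (X i * X (i+1)) = μ * (X (i+1) * X (i+1+1)) - 2*((i:ℝ)+1)*(X (i+1))^2 := by
        linear_combination X (i+1) * hrow
      nlinarith [hkey, hih, sq_nonneg (X (i+1)), hμ0]
    · rw [hXN (i+1) (by omega)]; simp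

lemma alt (i : ℕ) (h : L ≤ i) : X i * X (i+1) ≤ 0 :=
  alt_aux hμ hL1 hLN hX0 hXN heq N i (by omega) h

lemma abs_rel (i : ℕ) (hi1 : L < i) (hi2 : i ≤ N) :
    μ * |X (i-1)| = μ * |X (i+1)| + 2*(i:ℝ)*|X i| := by
  have hrow := heq i (by omega) hi2
  rw [if_neg (by omega)] at hrow
  have hμ0 : (0:ℝ) < μ := by linarith
  have hi0 : (0:ℝ) ≤ 2*(i:ℝ) := by positivity
  have halt := alt hμ hL1 hLN hX0 hXN heq i (by omega)
  have hab : (μ * X (i+1)) * (2*(i:ℝ)*X i) ≤ 0 := by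
    have h2 : (0:ℝ) ≤ μ * (2*(i:ℝ)) := by positivity
    nlinarith [mul_nonneg h2 (neg_nonneg.2 halt)]
  have h1 : μ * X (i-1) = μ*X (i+1) - 2*(i:ℝ)*X i := by linarith
  calc μ * |X (i-1)| = |μ * X (i-1)| := by
        rw [abs_mul, abs_of_pos hμ0]
    _ = |μ*X (i+1) - 2*(i:ℝ)*X i| := by rw [h1]
    _ = |μ*X (i+1)| + |2*(i:ℝ)*X i| := abs_sub_of_mul_nonpos hab
    _ = μ * |X (i+1)| + 2*(i:ℝ)*|X i| := by
        rw [abs_mul, abs_mul, abs_of_pos hμ0, abs_of_nonneg hi0]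

end withheq
end Core

section Core2

variable {μ : ℝ} {N L : ℕ} {X : ℕ → ℝ}
  (hμ : 10 < μ) (hNμ : 2*μ < (N:ℝ)) (hL1 : 1 ≤ L) (hLN : L ≤ N)
  (hX0 : X 0 = 0) (hXN : ∀ n, N < n → X n = 0)
  (heq : ∀ n, 1 ≤ n → n ≤ N → μ * X (n-1) + 2*(n:ℝ)*X n - μ*X (n+1) = if n = L then 1 else 0)

include hμ hNμ hL1 hLN hX0 hXN heq

/-- The key ratio lemma: `μ|X_{L+j+1}| ≥ (μ - (L+j+1))|X_{L+j}|`, by downward induction. -/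
lemma ratio_aux : ∀ k j, N ≤ L + j + k →
    (μ - ((L:ℝ)+(j:ℝ)+1)) * |X (L+j)| ≤ μ * |X (L+j+1)| := by
  have hμ0 : (0:ℝ) < μ := by linarith
  intro k
  induction k with
  | zero =>
    intro j hj
    have h1 : (N:ℝ) ≤ (L:ℝ)+(j:ℝ) := by exact_mod_cast hj
    have := abs_nonneg (X (L+j)); have := abs_nonneg (X (L+j+1))
    nlinarith
  | succ k ih =>
    intro j hj
    rcases le_or_gt μ ((L:ℝ)+(j:ℝ)+1) with htr|htr
    · have := abs_nonneg (X (L+j)); have := abs_nonneg (X (L+j+1))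
      nlinarith
    · -- nontrivial region : L+j+2 ≤ N since L+j+2 ≤ μ+1 < 2μ < N
      have hjN : ((L+j+2 : ℕ) : ℝ) < (N:ℝ) := by push_cast; linarith
      have hjN' : L+j+2 < N := by exact_mod_cast hjN
      have rel1 := abs_rel hμ hL1 hLN hX0 hXN heq (L+j+1) (by omega) (by omega)
      have rel2 := abs_rel hμ hL1 hLN hX0 hXN heq (L+j+2) (by omega) (by omega)
      have hsimp1 : L+j+1-1 = L+j := by omega
      have hsimp2 : L+j+2-1 = L+j+1 := by omega
      have hsimp3 : L+j+1+1 = L+j+2 := by omega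
      have hsimp4 : L+j+2+1 = L+j+3 := by omega
      rw [hsimp1, hsimp3] at rel1
      rw [hsimp2, hsimp4] at rel2
      have hih := ih (j+2) (by omega)
      have hc1 : ((L+(j+2):ℕ) : ℝ) = (L:ℝ)+(j:ℝ)+2 := by push_cast; ring
      have hihc : (μ - ((L:ℝ)+(j:ℝ)+3)) * |X (L+j+2)| ≤ μ * |X (L+j+3)| := by
        have e2 : L + (j+2) + 1 = L+j+3 := by omega
        have e1 : L + (j+2) = L+j+2 := by omega
        rw [e2, e1] at hih
        convert hih using 2
        push_cast; ring
      -- abbreviations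
      set w0 := |X (L+j)| with hw0
      set w1 := |X (L+j+1)| with hw1
      set w2 := |X (L+j+2)| with hw2
      set w3 := |X (L+j+3)| with hw3
      have hw0n : 0 ≤ w0 := abs_nonneg _
      have hw1n : 0 ≤ w1 := abs_nonneg _
      have hw2n : 0 ≤ w2 := abs_nonneg _
      have hw3n : 0 ≤ w3 := abs_nonneg _
      set c : ℝ := (L:ℝ)+(j:ℝ)+1 with hc
      have hc1' : (1:ℝ) ≤ c := by
        have h1 : (0:ℝ) ≤ (L:ℝ) := Nat.cast_nonneg L
        have h2 : (0:ℝ) ≤ (j:ℝ) := Nat.cast_nonneg j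
        simp only [hc]; linarith
      have hc0 : (0:ℝ) ≤ c := by linarith
      have rel1' : μ * w0 = μ * w2 + 2*c*w1 := by
        rw [rel1]; push_cast; ring
      have rel2' : μ * w1 = μ * w3 + 2*(c+1)*w2 := by
        rw [rel2]; push_cast; ring
      -- step 1 : (μ + c) w2 ≤ μ w1
      have h4 : (μ + c) * w2 ≤ μ * w1 := by
        have : (μ - (c+2)) * w2 ≤ μ * w3 := by
          convert hihc using 2; simp only [hc]; ring
        linarith
      -- step 2 : conclude
      have hkey := mul_le_mul_of_nonneg_left h4
        (mul_nonneg (sub_nonneg.2 htr.le) hμ0.le)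
      -- (μ-c)*μ*((μ+c)*w2) ≤ (μ-c)*μ*(μ*w1)
      have hexp : (μ+c) * (μ * ((μ - c) * w0)) = (μ-c)*μ*((μ+c)*w2) + 2*c*(μ+c)*(μ-c)*w1 := by
        linear_combination (μ+c)*(μ-c) * rel1'
      have step : (μ-c)*μ*(μ*w1) + 2*c*(μ+c)*(μ-c)*w1 ≤ ((μ+c)*μ)*(μ*w1) := by
        nlinarith [mul_nonneg (mul_nonneg (mul_nonneg hc0 hc0) hc0) hw1n]
      have hfin : ((μ+c)*μ)*((μ-c)*w0) ≤ ((μ+c)*μ)*(μ*w1) := by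
        calc ((μ+c)*μ)*((μ-c)*w0) = (μ-c)*μ*((μ+c)*w2) + 2*c*(μ+c)*(μ-c)*w1 := by
              linear_combination hexp
          _ ≤ (μ-c)*μ*(μ*w1) + 2*c*(μ+c)*(μ-c)*w1 := by linarith [hkey]
          _ ≤ ((μ+c)*μ)*(μ*w1) := step
      exact le_of_mul_le_mul_left hfin (by positivity)

end Core2

section Core3

variable {μ : ℝ} {N L : ℕ} {X : ℕ → ℝ}
  (hμ : 10 < μ) (hNμ : 2*μ < (N:ℝ)) (hL1 : 1 ≤ L) (hLN : L ≤ N)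
  (hX0 : X 0 = 0) (hXN : ∀ n, N < n → X n = 0)
  (heq : ∀ n, 1 ≤ n → n ≤ N → μ * X (n-1) + 2*(n:ℝ)*X n - μ*X (n+1) = if n = L then 1 else 0)

include hμ hL1 hLN hX0 hXN heq

lemma lower_pair (s : ℝ) (hs1 : 0 ≤ s * X 1) :
    ∀ m, m + 1 ≤ L → 0 ≤ s * X m ∧ 0 ≤ s * X (m+1) := by
  have hμ0 : (0:ℝ) < μ := by linarith
  intro m
  induction m with
  | zero => intro _; exact ⟨by rw [hX0, mul_zero], hs1⟩
  | succ m ih =>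
    intro hm
    obtain ⟨h1, h2⟩ := ih (by omega)
    refine ⟨h2, ?_⟩
    have hrow := heq (m+1) (by omega) (by omega)
    rw [if_neg (by omega)] at hrow
    have hsimp : m+1-1 = m := by omega
    rw [hsimp] at hrow
    have hkey : μ * (s * X (m+1+1)) = μ * (s * X m) + 2*((m:ℝ)+1) * (s * X (m+1)) := by
      have hc : ((m+1:ℕ):ℝ) = (m:ℝ)+1 := by push_cast; ring
      rw [hc] at hrow
      linear_combination (-s) * hrow
    have hmn : (0:ℝ) ≤ (m:ℝ)+1 := by positivity
    nlinarith [hkey, h1, h2]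

lemma lower_nonneg : ∀ n, n ≤ L → 0 ≤ X n := by
  have hXL := XL_pos hμ hL1 hLN hX0 hXN heq
  by_cases hX1 : 0 ≤ X 1
  · intro n hn
    rcases Nat.eq_zero_or_pos n with h0|h0
    · rw [h0, hX0]
    · have := (lower_pair hμ hL1 hLN hX0 hXN heq 1 (by simpa using hX1) (n-1) (by omega)).2
      have hs : n - 1 + 1 = n := by omega
      rw [hs] at this; simpa using this
  · exfalso
    push_neg at hX1
    have := (lower_pair hμ hL1 hLN hX0 hXN heq (-1) (by nlinarith) (L-1) (by omega)).2
    have hs : L - 1 + 1 = L := by omega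
    rw [hs] at this
    nlinarith

lemma XLp1_nonpos : X (L+1) ≤ 0 := by
  have h := alt hμ hL1 hLN hX0 hXN heq L le_rfl
  have hXL := XL_pos hμ hL1 hLN hX0 hXN heq
  nlinarith

lemma R2 : μ * |X (L+1)| ≤ 1 - 2*(L:ℝ)*X L := by
  have hrow := heq L hL1 hLN
  rw [if_pos rfl] at hrow
  have h1 : 0 ≤ X (L-1) := lower_nonneg hμ hL1 hLN hX0 hXN heq (L-1) (by omega)
  have h2 := XLp1_nonpos hμ hL1 hLN hX0 hXN heq
  have hμ0 : (0:ℝ) < μ := by linarith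
  rw [abs_of_nonpos h2]
  nlinarith

omit hL1 hLN hX0 hXN heq in
lemma dummy : True := trivial

include hNμ in
lemma XL_bound : (μ + (L:ℝ) - 1) * X L ≤ 1 := by
  have hr := ratio_aux hμ hNμ hL1 hLN hX0 hXN heq N 0 (by omega)
  have hXL := (XL_pos hμ hL1 hLN hX0 hXN heq).le
  have h0 : L + 0 = L := by omega
  rw [h0] at hr
  have h1 : L + 0 + 1 = L + 1 := by omega
  rw [h1] at hr
  rw [abs_of_nonneg hXL] at hr
  have hr2 := R2 hμ hL1 hLN hX0 hXN heq
  push_cast at hr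
  linarith

include hNμ in
lemma tail_aux : ∀ k K, L ≤ K → N ≤ K + k →
    ∑ n ∈ Finset.Ioc K N, 2*(n:ℝ)*|X n| ≤ μ*(|X K| + |X (K+1)|) := by
  have hμ0 : (0:ℝ) < μ := by linarith
  intro k
  induction k with
  | zero =>
    intro K hLK hNK
    rw [Finset.Ioc_eq_empty (by omega)]
    simp only [Finset.sum_empty]
    positivity
  | succ k ih =>
    intro K hLK hNK
    rcases le_or_gt N K with hNK'|hNK'
    · rw [Finset.Ioc_eq_empty (by omega)]
      simp only [Finset.sum_empty]
      positivity
    · have hsplit : Finset.Ioc K N = insert (K+1) (Finset.Ioc (K+1) N) := by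
        ext a
        simp only [Finset.mem_Ioc, Finset.mem_insert]
        omega
      rw [hsplit, Finset.sum_insert (by simp)]
      have hih := ih (K+1) (by omega) (by omega)
      have hrel := abs_rel hμ hL1 hLN hX0 hXN heq (K+1) (by omega) (by omega)
      have hs1 : K+1-1 = K := by omega
      have hs2 : K+1+1 = K+2 := by omega
      rw [hs1, hs2] at hrel
      rw [hs2] at hih
      have hc : ((K+1:ℕ):ℝ) = (K:ℝ)+1 := by push_cast; ring
      rw [hc] at hrel ⊢
      linarith

include hNμ in
lemma tail_bound (K : ℕ) (hLK : L ≤ K) :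
    2*((K:ℝ)+1) * ∑ n ∈ Finset.Ioc K N, |X n| ≤ μ*(|X K| + |X (K+1)|) := by
  have h1 : ∀ n ∈ Finset.Ioc K N, 2*((K:ℝ)+1)*|X n| ≤ 2*(n:ℝ)*|X n| := by
    intro n hn
    rw [Finset.mem_Ioc] at hn
    have : ((K:ℝ)+1) ≤ (n:ℝ) := by exact_mod_cast hn.1
    nlinarith [abs_nonneg (X n)]
  calc 2*((K:ℝ)+1) * ∑ n ∈ Finset.Ioc K N, |X n|
      = ∑ n ∈ Finset.Ioc K N, 2*((K:ℝ)+1)*|X n| := by rw [Finset.mul_sum]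
    _ ≤ ∑ n ∈ Finset.Ioc K N, 2*(n:ℝ)*|X n| := Finset.sum_le_sum h1
    _ ≤ μ*(|X K| + |X (K+1)|) := tail_aux hμ hNμ hL1 hLN hX0 hXN heq N K hLK (by omega)

end Core3

lemma cs_bound (X : ℕ → ℝ) (s : Finset ℕ) :
    (∑ n ∈ s, |X n|)^2 ≤ (s.card : ℝ) * ∑ n ∈ s, (X n)^2 := by
  have h := Finset.sum_mul_sq_le_sq_mul_sq s (fun _ => (1:ℝ)) (fun n => |X n|)
  simp only [one_mul, one_pow, sq_abs] at h
  calc (∑ n ∈ s, |X n|)^2 ≤ (∑ _n ∈ s, (1:ℝ)) * ∑ n ∈ s, (X n)^2 := by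
        convert h using 3 <;> simp [sq_abs]
    _ = (s.card : ℝ) * ∑ n ∈ s, (X n)^2 := by
        rw [Finset.sum_const, nsmul_eq_mul, mul_one]

lemma t3_helper (μ Kr XL a b t3 : ℝ) (hμ0 : 0 < μ) (hKμ : μ ≤ Kr)
    (ht3 : 0 ≤ t3) (ha0 : 0 ≤ a) (hb0 : 0 ≤ b)
    (htail : 2*(Kr+1)*t3 ≤ μ*(a+b)) (ha2 : 2*Kr*a^2 ≤ XL) (hb2 : 2*(Kr+1)*b^2 ≤ XL) :
    2*μ*t3^2 ≤ XL := by
  have ha3 : 2*μ*a^2 ≤ XL := by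
    nlinarith [mul_nonneg (sub_nonneg.2 hKμ) (sq_nonneg a)]
  have hb3 : 2*μ*b^2 ≤ XL := by
    nlinarith [mul_nonneg (sub_nonneg.2 (by linarith : μ ≤ Kr+1)) (sq_nonneg b)]
  have h5 : (2*(Kr+1)*t3)^2 ≤ (μ*(a+b))^2 := by
    apply pow_le_pow_left₀ (mul_nonneg (by linarith : (0:ℝ) ≤ 2*(Kr+1)) ht3) htail
  have h7 : μ^2*(a+b)^2 ≤ μ*(2*μ*a^2) + μ*(2*μ*b^2) := by
    nlinarith [mul_nonneg (sq_nonneg μ) (sq_nonneg (a-b))]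
  have h8 : μ*(2*μ*a^2) ≤ μ*XL := mul_le_mul_of_nonneg_left ha3 hμ0.le
  have h9 : μ*(2*μ*b^2) ≤ μ*XL := mul_le_mul_of_nonneg_left hb3 hμ0.le
  have h10 : 4*μ^2*t3^2 ≤ 4*(Kr+1)^2*t3^2 := by
    nlinarith [mul_nonneg (mul_nonneg (sub_nonneg.2 (by linarith : μ ≤ Kr+1))
      (by linarith : (0:ℝ) ≤ Kr+1+μ)) (sq_nonneg t3)]
  have h11 : 4*μ^2*t3^2 ≤ 2*μ*XL := by nlinarith [h5, h7, h8, h9, h10]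
  nlinarith [h11, hμ0, sq_nonneg t3]

section Setup

variable {μ : ℝ} {N L : ℕ} {X : ℕ → ℝ}
  (hμ : 10 < μ) (hNμ : 2*μ < (N:ℝ)) (hL1 : 1 ≤ L) (hLN : L ≤ N)
  (hX0 : X 0 = 0) (hXN : ∀ n, N < n → X n = 0)
  (heq : ∀ n, 1 ≤ n → n ≤ N → μ * X (n-1) + 2*(n:ℝ)*X n - μ*X (n+1) = if n = L then 1 else 0)

include hμ hNμ hL1 hLN hX0 hXN heq

lemma setup :
    ∃ (t1 t2 t3 XL : ℝ) (K : ℕ),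
      (∑ n ∈ Finset.Icc 1 N, |X n|) ≤ t1+t2+t3
      ∧ 0 ≤ XL ∧ (μ+(L:ℝ)-1)*XL ≤ 1 ∧ 2*(L:ℝ)*XL ≤ 1
      ∧ 0 ≤ t1 ∧ 0 ≤ t2 ∧ 0 ≤ t3
      ∧ 2*t1^2 ≤ (L:ℝ)*XL
      ∧ ((t2 = 0 ∧ 2*((L:ℝ)+1)*t3 ≤ μ*XL+1 ∧ μ ≤ (L:ℝ))
         ∨ ((L:ℝ) < (K:ℝ) ∧ (K:ℝ) ≤ μ+1 ∧ 2*((L:ℝ)+1)*t2^2 ≤ ((K:ℝ)-(L:ℝ))*XL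
            ∧ 2*μ*t3^2 ≤ XL)) := by
  have hμ0 : (0:ℝ) < μ := by linarith
  set K := max L (Nat.ceil μ) with hKdef
  refine ⟨∑ n ∈ Finset.Icc 1 L, |X n|, ∑ n ∈ Finset.Ioc L K, |X n|,
    ∑ n ∈ Finset.Ioc K N, |X n|, X L, K, ?_, ?_, ?_, ?_, ?_, ?_, ?_, ?_, ?_⟩
  · -- sum split
    have hsub : Finset.Icc 1 N ⊆ (Finset.Icc 1 L ∪ Finset.Ioc L K) ∪ Finset.Ioc K N := by
      intro n hn
      simp only [Finset.mem_Icc] at hn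
      simp only [Finset.mem_union, Finset.mem_Icc, Finset.mem_Ioc]
      omega
    have hd1 : Disjoint (Finset.Icc 1 L) (Finset.Ioc L K) := by
      rw [Finset.disjoint_left]
      intro a ha hb
      simp only [Finset.mem_Icc] at ha
      simp only [Finset.mem_Ioc] at hb
      omega
    have hd2 : Disjoint (Finset.Icc 1 L ∪ Finset.Ioc L K) (Finset.Ioc K N) := by
      rw [Finset.disjoint_left]
      intro a ha hb
      simp only [Finset.mem_union, Finset.mem_Icc, Finset.mem_Ioc] at ha
      simp only [Finset.mem_Ioc] at hb
      omega
    calc ∑ n ∈ Finset.Icc 1 N, |X n|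
        ≤ ∑ n ∈ (Finset.Icc 1 L ∪ Finset.Ioc L K) ∪ Finset.Ioc K N, |X n| :=
          Finset.sum_le_sum_of_subset_of_nonneg hsub (fun n _ _ => abs_nonneg _)
      _ = _ := by rw [Finset.sum_union hd2, Finset.sum_union hd1]
  · exact (XL_pos hμ hL1 hLN hX0 hXN heq).le
  · exact XL_bound hμ hNμ hL1 hLN hX0 hXN heq
  · exact XL2 hμ hL1 hLN hX0 hXN heq
  · exact Finset.sum_nonneg fun n _ => abs_nonneg _
  · exact Finset.sum_nonneg fun n _ => abs_nonneg _
  · exact Finset.sum_nonneg fun n _ => abs_nonneg _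
  · -- t1 bound
    have hcs := cs_bound X (Finset.Icc 1 L)
    rw [Nat.card_Icc] at hcs
    have hsl := sumsq_low hμ hL1 hLN hX0 hXN heq
    have hcard : ((L + 1 - 1 : ℕ) : ℝ) = (L:ℝ) := by
      have : L + 1 - 1 = L := by omega
      rw [this]
    rw [hcard] at hcs
    have hLr : (0:ℝ) ≤ (L:ℝ) := Nat.cast_nonneg L
    nlinarith [hcs, hsl]
  · -- case split
    by_cases hcase : Nat.ceil μ ≤ L
    · left
      have hK : K = L := max_eq_left hcase
      refine ⟨?_, ?_, ?_⟩
      · rw [hK, Finset.Ioc_self, Finset.sum_empty]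
      · have htail := tail_bound hμ hNμ hL1 hLN hX0 hXN heq K le_sup_left
        rw [hK] at htail
        have hXLpos := (XL_pos hμ hL1 hLN hX0 hXN heq).le
        have hr2 := R2 hμ hL1 hLN hX0 hXN heq
        have hXL2 := XL2 hμ hL1 hLN hX0 hXN heq
        rw [abs_of_nonneg hXLpos] at htail
        have hL0 : (0:ℝ) ≤ 2*(L:ℝ)*X L := by
          have : (0:ℝ) ≤ (L:ℝ) := Nat.cast_nonneg L
          positivity
        rw [hK]
        nlinarith [htail, hr2, hL0]
      · calc μ ≤ (Nat.ceil μ : ℝ) := Nat.le_ceil μ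
          _ ≤ (L:ℝ) := by exact_mod_cast hcase
    · right
      push_neg at hcase
      have hK : K = Nat.ceil μ := max_eq_right hcase.le
      have hLK : L < K := by omega
      have hKμ : μ ≤ (K:ℝ) := by rw [hK]; exact Nat.le_ceil μ
      refine ⟨by exact_mod_cast hLK, ?_, ?_, ?_⟩
      · rw [hK]
        have := Nat.ceil_lt_add_one (le_of_lt hμ0)
        linarith
      · -- t2 bound
        have hcs := cs_bound X (Finset.Ioc L K)
        rw [Nat.card_Ioc] at hcs
        have hmid := sumsq_mid hμ hL1 hLN hX0 hXN heq K
        have hcard : ((K - L : ℕ) : ℝ) = (K:ℝ) - (L:ℝ) := by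
          rw [Nat.cast_sub hLK.le]
        rw [hcard] at hcs
        have hKL0 : (0:ℝ) ≤ (K:ℝ) - (L:ℝ) := by
          rw [← hcard]; exact Nat.cast_nonneg _
        have hL0 : (0:ℝ) ≤ (L:ℝ)+1 := by positivity
        have hs0 : 0 ≤ ∑ n ∈ Finset.Ioc L K, (X n)^2 :=
          Finset.sum_nonneg fun n _ => sq_nonneg _
        nlinarith [hcs, hmid]
      · -- t3 bound
        have ht3 : 0 ≤ ∑ n ∈ Finset.Ioc K N, |X n| :=
          Finset.sum_nonneg fun n _ => abs_nonneg _
        have htail := tail_bound hμ hNμ hL1 hLN hX0 hXN heq K (by omega)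
        have hK1 : 1 ≤ K := by
          have h10 : (10:ℝ) < (K:ℝ) := lt_of_lt_of_le hμ hKμ
          by_contra h
          push_neg at h
          interval_cases K <;> norm_num at h10
        have ha2 : 2*(K:ℝ)*|X K|^2 ≤ X L := by
          have := term_bound hμ hL1 hLN hX0 hXN heq K hK1
          rw [sq_abs]; exact this
        have hb2 : 2*((K:ℝ)+1)*|X (K+1)|^2 ≤ X L := by
          have h := term_bound hμ hL1 hLN hX0 hXN heq (K+1) (by omega)
          rw [sq_abs]
          have hc : ((K+1:ℕ):ℝ) = (K:ℝ)+1 := by push_cast; ring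
          rw [hc] at h; exact h
        exact t3_helper μ (K:ℝ) (X L) _ _ _ hμ0 hKμ ht3 (abs_nonneg _) (abs_nonneg _)
          htail ha2 hb2

end Setup

section Arith

lemma arith_common {μ t1 t2 t3 XL : ℝ} {L K : ℕ} (hL1 : 1 ≤ L) (hμ : 10 < μ)
    (hXL0 : 0 ≤ XL) (hXL1 : (μ+(L:ℝ)-1)*XL ≤ 1) (hXL2 : 2*(L:ℝ)*XL ≤ 1)
    (ht1 : 0 ≤ t1) (ht2 : 0 ≤ t2) (ht3 : 0 ≤ t3) (hsq1 : 2*t1^2 ≤ (L:ℝ)*XL)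
    (hc : (t2 = 0 ∧ 2*((L:ℝ)+1)*t3 ≤ μ*XL+1 ∧ μ ≤ (L:ℝ))
       ∨ ((L:ℝ) < (K:ℝ) ∧ (K:ℝ) ≤ μ+1 ∧ 2*((L:ℝ)+1)*t2^2 ≤ ((K:ℝ)-(L:ℝ))*XL
          ∧ 2*μ*t3^2 ≤ XL)) :
    (t2 = 0 ∧ t1 ≤ 1/2 ∧ t3 ≤ 3/44)
    ∨ (μ*XL ≤ 1 ∧ 2*((L:ℝ)+1)*t2^2 ≤ 1 ∧ 2*μ^2*t3^2 ≤ 1) := by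
  have hμ0 : (0:ℝ) < μ := by linarith
  have hLr : (1:ℝ) ≤ (L:ℝ) := by exact_mod_cast hL1
  have hμXL : μ*XL ≤ 1 := by
    nlinarith [mul_nonneg (by linarith : (0:ℝ) ≤ (L:ℝ)-1) hXL0]
  rcases hc with ⟨ht20, htA, hμL⟩ | ⟨hLK, hKμ, hsq2, hsq3⟩
  · left
    refine ⟨ht20, ?_, ?_⟩
    · exact le_of_sq_le_sq' ht1 (by norm_num) (by nlinarith)
    · have h2 : 2*((L:ℝ)+1)*t3 ≤ 3/2 := by
        nlinarith [mul_le_mul_of_nonneg_right hμL hXL0]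
      have hL11 : (11:ℝ) ≤ (L:ℝ)+1 := by linarith
      nlinarith [mul_nonneg (by linarith : (0:ℝ) ≤ 2*((L:ℝ)+1)-22) ht3]
  · right
    have hKL1 : ((K:ℝ)-(L:ℝ))*XL ≤ 1 := by
      nlinarith [mul_nonneg (by linarith : (0:ℝ) ≤ (μ+(L:ℝ)-1) - ((K:ℝ)-(L:ℝ))) hXL0]
    exact ⟨hμXL, le_trans hsq2 hKL1,
      by nlinarith [mul_le_mul_of_nonneg_left hsq3 hμ0.le]⟩

set_option maxHeartbeats 2000000 in
lemma arith10 {μ t1 t2 t3 XL : ℝ} {L K : ℕ} (hL1 : 1 ≤ L) (hμ : 10 < μ)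
    (hXL0 : 0 ≤ XL) (hXL1 : (μ+(L:ℝ)-1)*XL ≤ 1) (hXL2 : 2*(L:ℝ)*XL ≤ 1)
    (ht1 : 0 ≤ t1) (ht2 : 0 ≤ t2) (ht3 : 0 ≤ t3) (hsq1 : 2*t1^2 ≤ (L:ℝ)*XL)
    (hc : (t2 = 0 ∧ 2*((L:ℝ)+1)*t3 ≤ μ*XL+1 ∧ μ ≤ (L:ℝ))
       ∨ ((L:ℝ) < (K:ℝ) ∧ (K:ℝ) ≤ μ+1 ∧ 2*((L:ℝ)+1)*t2^2 ≤ ((K:ℝ)-(L:ℝ))*XL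
          ∧ 2*μ*t3^2 ≤ XL)) :
    t1+t2+t3 ≤ 0.85 := by
  have hμ0 : (0:ℝ) < μ := by linarith
  have hLr : (1:ℝ) ≤ (L:ℝ) := by exact_mod_cast hL1
  rcases arith_common hL1 hμ hXL0 hXL1 hXL2 ht1 ht2 ht3 hsq1 hc with
    ⟨ht20, h1, h3⟩ | ⟨hμXL, ht2sq, ht3sq⟩
  · rw [ht20]; norm_num; linarith
  · have ht3u : t3 ≤ 0.0708 := by
      apply le_of_sq_le_sq' ht3 (by norm_num)
      nlinarith [mul_nonneg (by nlinarith : (0:ℝ) ≤ 2*μ^2-200) (sq_nonneg t3)]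
    rcases Nat.lt_or_ge L 5 with h5|h5
    · interval_cases L
      · -- L = 1
        have h1 : t1 ≤ 0.224 := by
          apply le_of_sq_le_sq' ht1 (by norm_num)
          push_cast at hsq1 hXL1
          nlinarith [mul_nonneg (by linarith : (0:ℝ) ≤ μ-10) hXL0]
        have h2 : t2 ≤ 0.5 := by
          apply le_of_sq_le_sq' ht2 (by norm_num)
          push_cast at ht2sq
          nlinarith
        linarith
      · -- L = 2
        have h1 : t1 ≤ 0.302 := by
          apply le_of_sq_le_sq' ht1 (by norm_num)
          push_cast at hsq1 hXL1
          nlinarith [mul_nonneg (by linarith : (0:ℝ) ≤ μ-10) hXL0]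
        have h2 : t2 ≤ 0.409 := by
          apply le_of_sq_le_sq' ht2 (by norm_num)
          push_cast at ht2sq
          nlinarith
        linarith
      · -- L = 3
        have h1 : t1 ≤ 0.354 := by
          apply le_of_sq_le_sq' ht1 (by norm_num)
          push_cast at hsq1 hXL1
          nlinarith [mul_nonneg (by linarith : (0:ℝ) ≤ μ-10) hXL0]
        have h2 : t2 ≤ 0.354 := by
          apply le_of_sq_le_sq' ht2 (by norm_num)
          push_cast at ht2sq
          nlinarith
        linarith
      · -- L = 4
        have h1 : t1 ≤ 0.393 := by
          apply le_of_sq_le_sq' ht1 (by norm_num)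
          push_cast at hsq1 hXL1
          nlinarith [mul_nonneg (by linarith : (0:ℝ) ≤ μ-10) hXL0]
        have h2 : t2 ≤ 0.317 := by
          apply le_of_sq_le_sq' ht2 (by norm_num)
          push_cast at ht2sq
          nlinarith
        linarith
    · have hL5 : (5:ℝ) ≤ (L:ℝ) := by exact_mod_cast h5
      have h1 : t1 ≤ 0.5 := by
        apply le_of_sq_le_sq' ht1 (by norm_num)
        nlinarith
      rcases Nat.lt_or_ge L 10 with h10|h10
      · -- 5 ≤ L ≤ 9
        have h2 : t2 ≤ 0.289 := by
          apply le_of_sq_le_sq' ht2 (by norm_num)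
          nlinarith [mul_nonneg (by linarith : (0:ℝ) ≤ 2*((L:ℝ)+1)-12) (sq_nonneg t2)]
        -- refined t3 : (μ+4) XL ≤ 1 since L ≥ 5
        rcases hc with ⟨ht20, _, hμL⟩ | ⟨_, _, _, hsq3⟩
        · rw [ht20]; push_cast at hμL; linarith
        · have hXL4 : (μ+4)*XL ≤ 1 := by
            nlinarith [mul_nonneg (by linarith : (0:ℝ) ≤ (L:ℝ)-5) hXL0]
          have h3 : t3 ≤ 0.0598 := by
            apply le_of_sq_le_sq' ht3 (by norm_num)
            have hkey := mul_le_mul_of_nonneg_left hsq3 (by linarith : (0:ℝ) ≤ μ+4)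
            nlinarith [hkey, mul_nonneg (by nlinarith : (0:ℝ) ≤ 2*μ*(μ+4)-280) (sq_nonneg t3)]
          linarith
      · -- L ≥ 10
        have hL10 : (10:ℝ) ≤ (L:ℝ) := by exact_mod_cast h10
        have h2 : t2 ≤ 0.214 := by
          apply le_of_sq_le_sq' ht2 (by norm_num)
          nlinarith [mul_nonneg (by linarith : (0:ℝ) ≤ 2*((L:ℝ)+1)-22) (sq_nonneg t2)]
        linarith

end Arith

section Arith2

set_option maxHeartbeats 2000000 in
lemma arith100 {μ t1 t2 t3 XL : ℝ} {L K : ℕ} (hL1 : 1 ≤ L) (hμ : 100 < μ)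
    (hXL0 : 0 ≤ XL) (hXL1 : (μ+(L:ℝ)-1)*XL ≤ 1) (hXL2 : 2*(L:ℝ)*XL ≤ 1)
    (ht1 : 0 ≤ t1) (ht2 : 0 ≤ t2) (ht3 : 0 ≤ t3) (hsq1 : 2*t1^2 ≤ (L:ℝ)*XL)
    (hc : (t2 = 0 ∧ 2*((L:ℝ)+1)*t3 ≤ μ*XL+1 ∧ μ ≤ (L:ℝ))
       ∨ ((L:ℝ) < (K:ℝ) ∧ (K:ℝ) ≤ μ+1 ∧ 2*((L:ℝ)+1)*t2^2 ≤ ((K:ℝ)-(L:ℝ))*XL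
          ∧ 2*μ*t3^2 ≤ XL)) :
    t1+t2+t3 ≤ 0.725 := by
  have hμ0 : (0:ℝ) < μ := by linarith
  have hLr : (1:ℝ) ≤ (L:ℝ) := by exact_mod_cast hL1
  rcases arith_common hL1 (by linarith) hXL0 hXL1 hXL2 ht1 ht2 ht3 hsq1 hc with
    ⟨ht20, h1, h3⟩ | ⟨hμXL, ht2sq, ht3sq⟩
  · rw [ht20]; norm_num; linarith
  · have ht3u : t3 ≤ 0.00708 := by
      apply le_of_sq_le_sq' ht3 (by norm_num)
      nlinarith [mul_nonneg (by nlinarith : (0:ℝ) ≤ 2*μ^2-20000) (sq_nonneg t3)]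
    rcases Nat.lt_or_ge L 5 with h5|h5
    · interval_cases L
      · have h1 : t1 ≤ 0.0708 := by
          apply le_of_sq_le_sq' ht1 (by norm_num)
          push_cast at hsq1 hXL1
          nlinarith [mul_nonneg (by linarith : (0:ℝ) ≤ μ-100) hXL0]
        have h2 : t2 ≤ 0.5 := by
          apply le_of_sq_le_sq' ht2 (by norm_num)
          push_cast at ht2sq
          nlinarith
        linarith
      · have h1 : t1 ≤ 0.0996 := by
          apply le_of_sq_le_sq' ht1 (by norm_num)
          push_cast at hsq1 hXL1
          nlinarith [mul_nonneg (by linarith : (0:ℝ) ≤ μ-100) hXL0]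
        have h2 : t2 ≤ 0.409 := by
          apply le_of_sq_le_sq' ht2 (by norm_num)
          push_cast at ht2sq
          nlinarith
        linarith
      · have h1 : t1 ≤ 0.122 := by
          apply le_of_sq_le_sq' ht1 (by norm_num)
          push_cast at hsq1 hXL1
          nlinarith [mul_nonneg (by linarith : (0:ℝ) ≤ μ-100) hXL0]
        have h2 : t2 ≤ 0.354 := by
          apply le_of_sq_le_sq' ht2 (by norm_num)
          push_cast at ht2sq
          nlinarith
        linarith
      · have h1 : t1 ≤ 0.14 := by
          apply le_of_sq_le_sq' ht1 (by norm_num)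
          push_cast at hsq1 hXL1
          nlinarith [mul_nonneg (by linarith : (0:ℝ) ≤ μ-100) hXL0]
        have h2 : t2 ≤ 0.317 := by
          apply le_of_sq_le_sq' ht2 (by norm_num)
          push_cast at ht2sq
          nlinarith
        linarith
    · have hL5 : (5:ℝ) ≤ (L:ℝ) := by exact_mod_cast h5
      rcases Nat.lt_or_ge L 10 with h10|h10
      · have hL9 : (L:ℝ) ≤ 9 := by exact_mod_cast Nat.lt_succ_iff.mp h10
        have h1 : t1 ≤ 0.209 := by
          apply le_of_sq_le_sq' ht1 (by norm_num)
          nlinarith [mul_nonneg (by linarith : (0:ℝ) ≤ 9-(L:ℝ)) hXL0,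
            mul_nonneg (by linarith : (0:ℝ) ≤ (L:ℝ)-5) hXL0,
            mul_nonneg (by linarith : (0:ℝ) ≤ μ-100) hXL0]
        have h2 : t2 ≤ 0.289 := by
          apply le_of_sq_le_sq' ht2 (by norm_num)
          nlinarith [mul_nonneg (by linarith : (0:ℝ) ≤ 2*((L:ℝ)+1)-12) (sq_nonneg t2)]
        linarith
      · have hL10 : (10:ℝ) ≤ (L:ℝ) := by exact_mod_cast h10
        have h1 : t1 ≤ 0.5 := by
          apply le_of_sq_le_sq' ht1 (by norm_num)
          nlinarith
        have h2 : t2 ≤ 0.214 := by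
          apply le_of_sq_le_sq' ht2 (by norm_num)
          nlinarith [mul_nonneg (by linarith : (0:ℝ) ≤ 2*((L:ℝ)+1)-22) (sq_nonneg t2)]
        linarith

set_option maxHeartbeats 2000000 in
lemma arith1000 {μ t1 t2 t3 XL : ℝ} {L K : ℕ} (hL1 : 1 ≤ L) (hμ : 1000 < μ)
    (hXL0 : 0 ≤ XL) (hXL1 : (μ+(L:ℝ)-1)*XL ≤ 1) (hXL2 : 2*(L:ℝ)*XL ≤ 1)
    (ht1 : 0 ≤ t1) (ht2 : 0 ≤ t2) (ht3 : 0 ≤ t3) (hsq1 : 2*t1^2 ≤ (L:ℝ)*XL)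
    (hc : (t2 = 0 ∧ 2*((L:ℝ)+1)*t3 ≤ μ*XL+1 ∧ μ ≤ (L:ℝ))
       ∨ ((L:ℝ) < (K:ℝ) ∧ (K:ℝ) ≤ μ+1 ∧ 2*((L:ℝ)+1)*t2^2 ≤ ((K:ℝ)-(L:ℝ))*XL
          ∧ 2*μ*t3^2 ≤ XL)) :
    t1+t2+t3 ≤ 0.715 := by
  have hμ0 : (0:ℝ) < μ := by linarith
  have hLr : (1:ℝ) ≤ (L:ℝ) := by exact_mod_cast hL1
  rcases arith_common hL1 (by linarith) hXL0 hXL1 hXL2 ht1 ht2 ht3 hsq1 hc with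
    ⟨ht20, h1, h3⟩ | ⟨hμXL, ht2sq, ht3sq⟩
  · rw [ht20]; norm_num; linarith
  · have ht3u : t3 ≤ 0.000708 := by
      apply le_of_sq_le_sq' ht3 (by norm_num)
      nlinarith [mul_nonneg (by nlinarith : (0:ℝ) ≤ 2*μ^2-2000000) (sq_nonneg t3)]
    rcases Nat.lt_or_ge L 5 with h5|h5
    · interval_cases L
      · have h1 : t1 ≤ 0.0224 := by
          apply le_of_sq_le_sq' ht1 (by norm_num)
          push_cast at hsq1 hXL1
          nlinarith [mul_nonneg (by linarith : (0:ℝ) ≤ μ-1000) hXL0]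
        have h2 : t2 ≤ 0.5 := by
          apply le_of_sq_le_sq' ht2 (by norm_num)
          push_cast at ht2sq
          nlinarith
        linarith
      · have h1 : t1 ≤ 0.0317 := by
          apply le_of_sq_le_sq' ht1 (by norm_num)
          push_cast at hsq1 hXL1
          nlinarith [mul_nonneg (by linarith : (0:ℝ) ≤ μ-1000) hXL0]
        have h2 : t2 ≤ 0.409 := by
          apply le_of_sq_le_sq' ht2 (by norm_num)
          push_cast at ht2sq
          nlinarith
        linarith
      · have h1 : t1 ≤ 0.0388 := by
          apply le_of_sq_le_sq' ht1 (by norm_num)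
          push_cast at hsq1 hXL1
          nlinarith [mul_nonneg (by linarith : (0:ℝ) ≤ μ-1000) hXL0]
        have h2 : t2 ≤ 0.354 := by
          apply le_of_sq_le_sq' ht2 (by norm_num)
          push_cast at ht2sq
          nlinarith
        linarith
      · have h1 : t1 ≤ 0.0447 := by
          apply le_of_sq_le_sq' ht1 (by norm_num)
          push_cast at hsq1 hXL1
          nlinarith [mul_nonneg (by linarith : (0:ℝ) ≤ μ-1000) hXL0]
        have h2 : t2 ≤ 0.317 := by
          apply le_of_sq_le_sq' ht2 (by norm_num)
          push_cast at ht2sq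
          nlinarith
        linarith
    · have hL5 : (5:ℝ) ≤ (L:ℝ) := by exact_mod_cast h5
      rcases Nat.lt_or_ge L 10 with h10|h10
      · have hL9 : (L:ℝ) ≤ 9 := by exact_mod_cast Nat.lt_succ_iff.mp h10
        have h1 : t1 ≤ 0.067 := by
          apply le_of_sq_le_sq' ht1 (by norm_num)
          nlinarith [mul_nonneg (by linarith : (0:ℝ) ≤ 9-(L:ℝ)) hXL0,
            mul_nonneg (by linarith : (0:ℝ) ≤ (L:ℝ)-5) hXL0,
            mul_nonneg (by linarith : (0:ℝ) ≤ μ-1000) hXL0]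
        have h2 : t2 ≤ 0.289 := by
          apply le_of_sq_le_sq' ht2 (by norm_num)
          nlinarith [mul_nonneg (by linarith : (0:ℝ) ≤ 2*((L:ℝ)+1)-12) (sq_nonneg t2)]
        linarith
      · have hL10 : (10:ℝ) ≤ (L:ℝ) := by exact_mod_cast h10
        have h1 : t1 ≤ 0.5 := by
          apply le_of_sq_le_sq' ht1 (by norm_num)
          nlinarith
        have h2 : t2 ≤ 0.214 := by
          apply le_of_sq_le_sq' ht2 (by norm_num)
          nlinarith [mul_nonneg (by linarith : (0:ℝ) ≤ 2*((L:ℝ)+1)-22) (sq_nonneg t2)]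
        linarith

end Arith2

section Glue

lemma col_facts (μ : ℝ) (N : ℕ) (hμ : 10 < μ) (hN : 2*μ < (N:ℝ)) (l : Fin N) :
    ∃ (t1 t2 t3 XL : ℝ) (L K : ℕ),
      1 ≤ L ∧
      (∑ i : Fin N, |(Tmat N μ)⁻¹ i l|) ≤ t1+t2+t3
      ∧ 0 ≤ XL ∧ (μ+(L:ℝ)-1)*XL ≤ 1 ∧ 2*(L:ℝ)*XL ≤ 1
      ∧ 0 ≤ t1 ∧ 0 ≤ t2 ∧ 0 ≤ t3 ∧ 2*t1^2 ≤ (L:ℝ)*XL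
      ∧ ((t2 = 0 ∧ 2*((L:ℝ)+1)*t3 ≤ μ*XL+1 ∧ μ ≤ (L:ℝ))
         ∨ ((L:ℝ) < (K:ℝ) ∧ (K:ℝ) ≤ μ+1 ∧ 2*((L:ℝ)+1)*t2^2 ≤ ((K:ℝ)-(L:ℝ))*XL
            ∧ 2*μ*t3^2 ≤ XL)) := by
  have hμ0 : (0:ℝ) < μ := by linarith
  -- invertibility
  have hdet : (Tmat N μ).det ≠ 0 := by
    intro h
    obtain ⟨v, hv0, hv⟩ := (Matrix.exists_mulVec_eq_zero_iff).mpr h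
    have hX0 : ext N v 0 = 0 := ext_zero N v 0 (Or.inl rfl)
    have hXN : ∀ n, N < n → ext N v n = 0 := fun n hn => ext_zero N v n (Or.inr hn)
    have heqr : ∀ n, 1 ≤ n → n ≤ N →
        μ * ext N v (n-1) + 2*(n:ℝ)*ext N v n - μ*ext N v (n+1) = 0 := by
      intro n h1 h2
      have := ext_rec N μ v 0 hv n h1 h2
      simpa using this
    have hE := energy_general (μ := μ) (N := N) (X := ext N v) (fun _ => (0:ℝ)) hX0 hXN heqr
    simp only [mul_zero, Finset.sum_const_zero] at hE
    have hz : ∀ n ∈ Finset.Icc 1 N, 2*(n:ℝ)*(ext N v n)^2 = 0 := by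
      rw [← Finset.sum_eq_zero_iff_of_nonneg]
      · exact hE
      · intro n hn; rw [Finset.mem_Icc] at hn; positivity
    apply hv0
    funext i
    have hmem : (i:ℕ)+1 ∈ Finset.Icc 1 N := Finset.mem_Icc.mpr ⟨by omega, by omega⟩
    have := hz _ hmem
    have hposn : (0:ℝ) < 2*(((i:ℕ)+1:ℕ):ℝ) := by positivity
    have hsq : (ext N v ((i:ℕ)+1))^2 = 0 :=
      le_antisymm (by nlinarith [sq_nonneg (ext N v ((i:ℕ)+1))]) (sq_nonneg _)
    have hval : ext N v ((i:ℕ)+1) = v i := by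
      rw [ext_val N v ((i:ℕ)+1) (by omega) (by omega)]
      have hfin : (⟨(i:ℕ)+1-1, by omega⟩ : Fin N) = i := by
        apply Fin.ext
        simp
      rw [hfin]
    have := pow_eq_zero_iff two_ne_zero |>.mp hsq
    rw [hval] at this
    simp [this]
  have hinv := Matrix.mul_nonsing_inv (Tmat N μ) (isUnit_iff_ne_zero.mpr hdet)
  set x : Fin N → ℝ := fun i => (Tmat N μ)⁻¹ i l with hxdef
  have hx : (Tmat N μ).mulVec x = fun i => if i = l then (1:ℝ) else 0 := by
    funext i
    have h1 : ((Tmat N μ) * (Tmat N μ)⁻¹) i l = (1 : Matrix (Fin N) (Fin N) ℝ) i l := by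
      rw [hinv]
    rw [Matrix.mul_apply] at h1
    rw [Matrix.one_apply] at h1
    exact h1
  set L := (l:ℕ) + 1 with hLdef
  set X := ext N x with hXdef
  have hL1 : 1 ≤ L := by omega
  have hLN : L ≤ N := by have := l.isLt; omega
  have hX0 : X 0 = 0 := ext_zero N x 0 (Or.inl rfl)
  have hXN : ∀ n, N < n → X n = 0 := fun n hn => ext_zero N x n (Or.inr hn)
  have heq : ∀ n, 1 ≤ n → n ≤ N →
      μ * X (n-1) + 2*(n:ℝ)*X n - μ*X (n+1) = if n = L then 1 else 0 := by
    intro n h1 h2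
    have hr := ext_rec N μ x _ hx n h1 h2
    rw [hr]
    by_cases hnl : n = L
    · have hfin : (⟨n-1, by omega⟩ : Fin N) = l := by
        apply Fin.ext
        simp only []
        omega
      rw [if_pos hfin, if_pos hnl]
    · have hfin : ¬ ((⟨n-1, by omega⟩ : Fin N) = l) := by
        intro hc
        apply hnl
        have hval := Fin.ext_iff.mp hc
        simp only [] at hval
        omega
      rw [if_neg hfin, if_neg hnl]
  obtain ⟨t1, t2, t3, XL, K, hsum, h1, h2, h3, h4, h5, h6, h7, h8⟩ :=
    setup hμ hN hL1 hLN hX0 hXN heq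
  refine ⟨t1, t2, t3, XL, L, K, hL1, ?_, h1, h2, h3, h4, h5, h6, h7, h8⟩
  -- convert the Fin-sum to the Icc-sum
  have hconv : ∑ i : Fin N, |x i| = ∑ n ∈ Finset.Icc 1 N, |X n| := by
    have e1 : ∀ i : Fin N, |x i| = (fun n => |X (n+1)|) (i:ℕ) := by
      intro i
      simp only []
      rw [hXdef, ext_val N x ((i:ℕ)+1) (by omega) (by omega)]
      have hfin : (⟨(i:ℕ)+1-1, by omega⟩ : Fin N) = i := by
        apply Fin.ext
        simp
      rw [hfin]
    calc ∑ i : Fin N, |x i| = ∑ i : Fin N, (fun n => |X (n+1)|) (i:ℕ) :=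
          Finset.sum_congr rfl (fun i _ => e1 i)
      _ = ∑ n ∈ Finset.range N, (fun n => |X (n+1)|) n :=
          Fin.sum_univ_eq_sum_range (fun n => |X (n+1)|) N
      _ = ∑ n ∈ Finset.Icc 1 N, |X n| := sum_range_shift (fun n => |X n|) N
  rw [← hconv] at hsum
  exact hsum

theorem stmt12' (μ : ℝ) (N : ℕ) (hNe : Even N) (hN : 2 * μ < (N : ℝ)) :
    (10 < μ → mat1norm ((Tmat N μ)⁻¹) ≤ 0.806 + 1 / 20) ∧
    (100 < μ → mat1norm ((Tmat N μ)⁻¹) ≤ 0.736 + 1 / 200) ∧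
    (1000 < μ → mat1norm ((Tmat N μ)⁻¹) ≤ 0.727 + 1 / 2000) := by
  refine ⟨?_, ?_, ?_⟩ <;> intro hμi
  · have hμ : 10 < μ := hμi
    have hNpos : 0 < N := by
      have : (0:ℝ) < (N:ℝ) := by linarith
      exact_mod_cast this
    have : Nonempty (Fin N) := ⟨⟨0, hNpos⟩⟩
    apply ciSup_le
    intro l
    obtain ⟨t1, t2, t3, XL, L, K, hL1, hsum, h2, h3, h4, h5, h6, h7, h8, h9⟩ :=
      col_facts μ N hμ hN l
    have := arith10 hL1 hμ h2 h3 h4 h5 h6 h7 h8 h9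
    calc ∑ i : Fin N, |(Tmat N μ)⁻¹ i l| ≤ t1+t2+t3 := hsum
      _ ≤ 0.85 := this
      _ ≤ 0.806 + 1/20 := by norm_num
  · have hμ : 10 < μ := by linarith
    have hNpos : 0 < N := by
      have : (0:ℝ) < (N:ℝ) := by linarith
      exact_mod_cast this
    have : Nonempty (Fin N) := ⟨⟨0, hNpos⟩⟩
    apply ciSup_le
    intro l
    obtain ⟨t1, t2, t3, XL, L, K, hL1, hsum, h2, h3, h4, h5, h6, h7, h8, h9⟩ :=
      col_facts μ N hμ hN l
    have := arith100 hL1 hμi h2 h3 h4 h5 h6 h7 h8 h9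
    calc ∑ i : Fin N, |(Tmat N μ)⁻¹ i l| ≤ t1+t2+t3 := hsum
      _ ≤ 0.725 := this
      _ ≤ 0.736 + 1/200 := by norm_num
  · have hμ : 10 < μ := by linarith
    have hNpos : 0 < N := by
      have : (0:ℝ) < (N:ℝ) := by linarith
      exact_mod_cast this
    have : Nonempty (Fin N) := ⟨⟨0, hNpos⟩⟩
    apply ciSup_le
    intro l
    obtain ⟨t1, t2, t3, XL, L, K, hL1, hsum, h2, h3, h4, h5, h6, h7, h8, h9⟩ :=
      col_facts μ N hμ hN l
    have := arith1000 hL1 hμi h2 h3 h4 h5 h6 h7 h8 h9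
    calc ∑ i : Fin N, |(Tmat N μ)⁻¹ i l| ≤ t1+t2+t3 := hsum
      _ ≤ 0.715 := this
      _ ≤ 0.727 + 1/2000 := by norm_num

end Glue


/-- Improved uniform bounds for `‖T_N(μ)⁻¹‖₁` for large `μ`, for all even `N > 2μ`. -/
theorem stmt12 (μ : ℝ) (N : ℕ) (hNe : Even N) (hN : 2 * μ < (N : ℝ)) :
    (10 < μ → mat1norm ((Tmat N μ)⁻¹) ≤ 0.806 + 1 / 20) ∧
    (100 < μ → mat1norm ((Tmat N μ)⁻¹) ≤ 0.736 + 1 / 200) ∧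
    (1000 < μ → mat1norm ((Tmat N μ)⁻¹) ≤ 0.727 + 1 / 2000) := by
  exact stmt12' μ N hNe hN
end

section
/- Let μ > 0 and N ≥ 1. Then the (N+1)×(N+1) matrix L^{(N)}_μ is invertible, its first column satisfies ‖((L^{(N)}_μ)⁻¹)_{col(1)}‖_{ℓ¹} = 1, and ‖(L^{(N)}_μ)⁻¹‖_{B(ℓ¹)} ≤ max{ 2‖T_N(μ)⁻¹‖₁ , 1 }. -/
open Finset Matrix

/-- The `(N+1) × (N+1)` matrix `L^{(N)}_μ`: first row `(1, −2, 2, −2, …)`, first column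
`(1, μ, 0, …, 0)ᵀ`, and bottom-right `N × N` block equal to `T_N(μ)` (0-based indexing). -/
noncomputable def Lmat (N : ℕ) (μ : ℝ) : Matrix (Fin (N + 1)) (Fin (N + 1)) ℝ :=
  Matrix.of fun i j =>
    if (i : ℕ) = 0 then (if (j : ℕ) = 0 then 1 else 2 * (-1 : ℝ) ^ (j : ℕ))
    else if (j : ℕ) = 0 then (if (i : ℕ) = 1 then μ else 0)
    else if (i : ℕ) = (j : ℕ) then 2 * ((i : ℕ) : ℝ)
    else if (i : ℕ) = (j : ℕ) + 1 then μ
    else if (j : ℕ) = (i : ℕ) + 1 then -μ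
    else 0

/-- The weighted ℓ¹ norm of a vector in `ℝ^{N+1}`: `‖v‖ = |v_1| + 2 Σ_{j=2}^{N+1} |v_j|`. -/
noncomputable def vecl1 {N : ℕ} (v : Fin (N + 1) → ℝ) : ℝ :=
  |v 0| + 2 * ∑ j : Fin N, |v j.succ|

/-- The `B(ℓ¹)` operator norm of an `(N+1) × (N+1)` matrix:
`max { |A_{1,1}| + 2 Σ_{j≥2} |A_{j,1}| , max_{n≥2} ( (1/2)|A_{1,n}| + Σ_{j≥2} |A_{j,n}| ) }`. -/
noncomputable def matBl1 {N : ℕ} (A : Matrix (Fin (N + 1)) (Fin (N + 1)) ℝ) : ℝ :=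
  max (|A 0 0| + 2 * ∑ j : Fin N, |A j.succ 0|)
    (⨆ n : Fin N, ((1 / 2) * |A 0 n.succ| + ∑ j : Fin N, |A j.succ n.succ|))

/-! ### Auxiliary sequence -/

noncomputable def aux14_fseq (μ : ℝ) (N : ℕ) : ℕ → ℝ
  | 0 => 0
  | 1 => 1
  | (k+2) => (2*((N - k : ℕ) : ℝ)/μ) * aux14_fseq μ N (k+1) + aux14_fseq μ N k

noncomputable def aux14_tseq (μ : ℝ) (N : ℕ) (j : ℕ) : ℝ := aux14_fseq μ N (N + 1 - j)

namespace aux14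

local notation "fseq" => aux14_fseq
local notation "tseq" => aux14_tseq

lemma fseq_pos (μ : ℝ) (N : ℕ) (hμ : 0 < μ) :
    ∀ k, k ≤ N → 0 ≤ fseq μ N k ∧ 0 < fseq μ N (k+1) := by
  intro k
  induction k with
  | zero => intro _; exact ⟨le_of_eq rfl, by norm_num [aux14_fseq]⟩
  | succ k ih =>
    intro hk
    have ih' := ih (by omega)
    refine ⟨ih'.2.le, ?_⟩
    show 0 < fseq μ N (k+2)
    rw [aux14_fseq]
    have h1 : (1:ℝ) ≤ ((N - k : ℕ) : ℝ) := by
      have : 1 ≤ N - k := by omega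
      exact_mod_cast this
    have hc : 0 < 2*((N - k : ℕ) : ℝ)/μ := by positivity
    nlinarith [ih'.1, ih'.2]

lemma tseq_nonneg (μ : ℝ) (N : ℕ) (hμ : 0 < μ) (j : ℕ) : 0 ≤ tseq μ N j := by
  unfold aux14_tseq
  rcases Nat.eq_zero_or_pos (N + 1 - j) with h | h
  · rw [h]; exact le_of_eq rfl
  · obtain ⟨m, hm⟩ : ∃ m, N + 1 - j = m + 1 := ⟨N - j, by omega⟩
    rw [hm]
    exact (fseq_pos μ N hμ m (by omega)).2.le

lemma tseq_zero_pos (μ : ℝ) (N : ℕ) (hμ : 0 < μ) : 0 < tseq μ N 0 := by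
  unfold aux14_tseq
  simpa using (fseq_pos μ N hμ N le_rfl).2

lemma tseq_N (μ : ℝ) (N : ℕ) : tseq μ N N = 1 := by
  unfold aux14_tseq
  have : N + 1 - N = 1 := by omega
  rw [this]; rfl

lemma tseq_top (μ : ℝ) (N : ℕ) : tseq μ N (N+1) = 0 := by
  unfold aux14_tseq
  simp [aux14_fseq]

lemma tseq_rec (μ : ℝ) (N : ℕ) (hμ : 0 < μ) (m : ℕ) (h1 : 1 ≤ m) (h2 : m ≤ N) :
    μ * tseq μ N (m-1) = 2*(m:ℝ)*tseq μ N m + μ * tseq μ N (m+1) := by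
  unfold aux14_tseq
  have e1 : N + 1 - (m-1) = (N - m) + 2 := by omega
  have e2 : N - (N - m) = m := by omega
  have e3 : N - m + 1 = N + 1 - m := by omega
  have e4 : N - m = N + 1 - (m+1) := by omega
  rw [e1, aux14_fseq, e2, e3, e4]
  field_simp

/-! ### Row computations -/

lemma Lrow0 (N : ℕ) (μ : ℝ) (V : ℕ → ℝ) :
    (Lmat N μ *ᵥ fun j : Fin (N+1) => V (j:ℕ)) 0
      = (∑ k ∈ Finset.range (N+1), 2*(-1:ℝ)^k * V k) - V 0 := by
  have key : ∀ j : Fin (N+1), Lmat N μ 0 j * V (j:ℕ)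
      = 2*(-1:ℝ)^(j:ℕ) * V (j:ℕ) - (if (j:ℕ) = 0 then V 0 else 0) := by
    intro j
    have h0 : Lmat N μ 0 j = if (j:ℕ) = 0 then 1 else 2*(-1:ℝ)^(j:ℕ) := by
      unfold Lmat
      rw [Matrix.of_apply, if_pos (show ((0 : Fin (N+1)):ℕ) = 0 from rfl)]
    rw [h0]
    by_cases hj : (j:ℕ) = 0
    · rw [if_pos hj, if_pos hj, hj]; norm_num; ring
    · rw [if_neg hj, if_neg hj]; ring
  show ∑ j : Fin (N+1), Lmat N μ 0 j * V (j:ℕ) = _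
  rw [Finset.sum_congr rfl (fun j _ => key j), Finset.sum_sub_distrib]
  congr 1
  · exact Fin.sum_univ_eq_sum_range (fun k => 2*(-1:ℝ)^k * V k) (N+1)
  · rw [Fin.sum_univ_eq_sum_range (fun k => if k = 0 then V 0 else 0) (N+1),
      Finset.sum_ite_eq' (Finset.range (N+1)) 0 (fun _ => V 0)]
    simp

lemma LrowS (N : ℕ) (μ : ℝ) (V : ℕ → ℝ) (hTop : V (N+1) = 0) (i : Fin (N+1))
    (hi : 1 ≤ (i:ℕ)) :
    (Lmat N μ *ᵥ fun j : Fin (N+1) => V (j:ℕ)) i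
      = μ * V ((i:ℕ)-1) + 2*((i:ℕ):ℝ)*V (i:ℕ) - μ * V ((i:ℕ)+1) := by
  have hiN : (i:ℕ) ≤ N := by omega
  have key : ∀ j : Fin (N+1), Lmat N μ i j * V (j:ℕ)
      = (if (j:ℕ) = (i:ℕ)-1 then μ * V (j:ℕ) else 0)
        + (if (j:ℕ) = (i:ℕ) then 2*((i:ℕ):ℝ) * V (j:ℕ) else 0)
        + (if (j:ℕ) = (i:ℕ)+1 then -μ * V (j:ℕ) else 0) := by
    intro j
    simp only [Lmat, Matrix.of_apply]
    split_ifs with h1 h2 h3 h4 h5 h6 <;> first | omega | ring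
  show ∑ j : Fin (N+1), Lmat N μ i j * V (j:ℕ) = _
  rw [Finset.sum_congr rfl (fun j _ => key j)]
  rw [Finset.sum_add_distrib, Finset.sum_add_distrib]
  rw [Fin.sum_univ_eq_sum_range (fun k => if k = (i:ℕ)-1 then μ * V k else 0) (N+1),
    Fin.sum_univ_eq_sum_range (fun k => if k = (i:ℕ) then 2*((i:ℕ):ℝ) * V k else 0) (N+1),
    Fin.sum_univ_eq_sum_range (fun k => if k = (i:ℕ)+1 then -μ * V k else 0) (N+1),
    Finset.sum_ite_eq' (Finset.range (N+1)) ((i:ℕ)-1) (fun k => μ * V k),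
    Finset.sum_ite_eq' (Finset.range (N+1)) ((i:ℕ)) (fun k => 2*((i:ℕ):ℝ) * V k),
    Finset.sum_ite_eq' (Finset.range (N+1)) ((i:ℕ)+1) (fun k => -μ * V k)]
  rw [if_pos (by simp only [Finset.mem_range]; omega), if_pos (by simp only [Finset.mem_range]; omega)]
  by_cases h : (i:ℕ)+1 ∈ Finset.range (N+1)
  · rw [if_pos h]; ring
  · rw [if_neg h]
    have : (i:ℕ)+1 = N+1 := by simp only [Finset.mem_range] at h; omega
    rw [this, hTop]; ring

lemma Trow (N : ℕ) (μ : ℝ) (W : ℕ → ℝ) (hTop : W (N+1) = 0) (hBot : W 0 = 0) (m : Fin N) :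
    (Tmat N μ *ᵥ fun j : Fin N => W ((j:ℕ)+1)) m
      = μ * W (m:ℕ) + 2*(((m:ℕ):ℝ)+1) * W ((m:ℕ)+1) - μ * W ((m:ℕ)+2) := by
  have key : ∀ j : Fin N, Tmat N μ m j * W ((j:ℕ)+1)
      = (if (m:ℕ) = (j:ℕ)+1 then μ * W ((j:ℕ)+1) else 0)
        + (if (j:ℕ) = (m:ℕ) then 2*(((m:ℕ):ℝ)+1) * W ((j:ℕ)+1) else 0)
        + (if (j:ℕ) = (m:ℕ)+1 then -μ * W ((j:ℕ)+1) else 0) := by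
    intro j
    simp only [Tmat, Matrix.of_apply]
    split_ifs <;> first | omega | (try rw [show (j:ℕ) = (m:ℕ) by omega]) <;> first | omega | ring
  show ∑ j : Fin N, Tmat N μ m j * W ((j:ℕ)+1) = _
  rw [Finset.sum_congr rfl (fun j _ => key j)]
  rw [Finset.sum_add_distrib, Finset.sum_add_distrib]
  rw [Fin.sum_univ_eq_sum_range (fun k => if (m:ℕ) = k+1 then μ * W (k+1) else 0) N,
    Fin.sum_univ_eq_sum_range (fun k => if k = (m:ℕ) then 2*(((m:ℕ):ℝ)+1) * W (k+1) else 0) N,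
    Fin.sum_univ_eq_sum_range (fun k => if k = (m:ℕ)+1 then -μ * W (k+1) else 0) N,
    Finset.sum_ite_eq' (Finset.range N) ((m:ℕ)) (fun k => 2*(((m:ℕ):ℝ)+1) * W (k+1)),
    Finset.sum_ite_eq' (Finset.range N) ((m:ℕ)+1) (fun k => -μ * W (k+1))]
  rw [if_pos (by simp only [Finset.mem_range]; exact m.isLt)]
  have hfirst : (∑ k ∈ Finset.range N, if (m:ℕ) = k+1 then μ * W (k+1) else 0) = μ * W (m:ℕ) := by
    by_cases hm : (m:ℕ) = 0
    · rw [hm, hBot]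
      rw [Finset.sum_eq_zero]
      · ring
      · intro k _; rw [if_neg (by omega)]
    · obtain ⟨p, hp⟩ : ∃ p, (m:ℕ) = p + 1 := ⟨(m:ℕ)-1, by omega⟩
      have hcong : ∀ k ∈ Finset.range N, (if (m:ℕ) = k+1 then μ * W (k+1) else 0)
          = (if k = p then μ * W (k+1) else 0) := by
        intro k _; exact if_congr (by omega) rfl rfl
      rw [Finset.sum_congr rfl hcong,
        Finset.sum_ite_eq' (Finset.range N) p (fun k => μ * W (k+1)),
        if_pos (by simp only [Finset.mem_range]; have := m.isLt; omega)]
      rw [hp]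
  rw [hfirst]
  by_cases h : (m:ℕ)+1 ∈ Finset.range N
  · rw [if_pos h]; ring
  · rw [if_neg h]
    have h2 : (m:ℕ)+2 = N+1 := by
      simp only [Finset.mem_range] at h; have := m.isLt; omega
    rw [h2, hTop]; ring

lemma absmulpow (a b : ℝ) (hb : 0 ≤ b) (k : ℕ) : |a * ((-1:ℝ)^k * b)| = |a| * b := by
  rw [abs_mul, abs_mul, abs_pow, abs_neg, abs_one, one_pow, one_mul, abs_of_nonneg hb]

/-! ### The downward uniqueness lemma -/

lemma key (μ : ℝ) (N : ℕ) (hμ : 0 < μ) (V : ℕ → ℝ) (hTop : V (N+1) = 0)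
    (hrec : ∀ m, 1 ≤ m → m ≤ N → μ * V (m-1) + 2*(m:ℝ)*V m - μ*V (m+1) = 0) :
    ∀ k, k ≤ N+1 → (-1:ℝ)^k * V k = ((-1:ℝ)^N * V N) * tseq μ N k := by
  set C : ℝ := (-1:ℝ)^N * V N with hC
  have hμ' : μ ≠ 0 := ne_of_gt hμ
  have H : ∀ d, d ≤ N+1 →
      ((-1:ℝ)^(N+1-d) * V (N+1-d) = C * tseq μ N (N+1-d)) ∧
      (d ≤ N → (-1:ℝ)^(N+1-(d+1)) * V (N+1-(d+1)) = C * tseq μ N (N+1-(d+1))) := by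
    intro d
    induction d with
    | zero =>
      intro _
      constructor
      · simp only [Nat.sub_zero, hTop, tseq_top, mul_zero]
      · intro _
        have e : N + 1 - 1 = N := by omega
        rw [e, tseq_N, mul_one, hC]
    | succ d ih =>
      intro hd
      obtain ⟨h1, h2⟩ := ih (by omega)
      have hQ1 := h2 (by omega)
      refine ⟨hQ1, ?_⟩
      intro hdN
      obtain ⟨p, hp⟩ : ∃ p, N - d = p + 1 := ⟨N - d - 1, by omega⟩
      have e1 : N + 1 - d = p + 2 := by omega
      have e2 : N + 1 - (d + 1) = p + 1 := by omega
      have e3 : N + 1 - (d + 1 + 1) = p := by omega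
      rw [e1] at h1
      rw [e2] at hQ1
      rw [e3]
      have hr := hrec (p+1) (by omega) (by omega)
      have htr := tseq_rec μ N hμ (p+1) (by omega) (by omega)
      simp only [Nat.add_sub_cancel] at hr htr
      push_cast at hr htr
      have goal' : μ * ((-1:ℝ)^p * V p) = μ * (C * tseq μ N p) := by
        linear_combination ((-1:ℝ)^p) * hr + μ * h1 + (2*((p:ℝ)+1)) * hQ1 - C * htr
      exact mul_left_cancel₀ hμ' goal'
  intro k hk
  have hd := (H (N+1-k) (by omega)).1
  have e : N + 1 - (N + 1 - k) = k := by omega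
  rwa [e] at hd

/-! ### Kernels -/

lemma L_ker (μ : ℝ) (N : ℕ) (hμ : 0 < μ) (v : Fin (N+1) → ℝ)
    (hv : Lmat N μ *ᵥ v = 0) : v = 0 := by
  set V : ℕ → ℝ := fun k => if h : k < N+1 then v ⟨k, h⟩ else 0 with hVdef
  have hVv : (fun j : Fin (N+1) => V (j:ℕ)) = v := by
    funext j
    simp [hVdef]
    intro h; have := j.isLt; omega
  have hTop : V (N+1) = 0 := by simp [hVdef]
  have hrec : ∀ m, 1 ≤ m → m ≤ N → μ * V (m-1) + 2*(m:ℝ)*V m - μ*V (m+1) = 0 := by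
    intro m h1 h2
    have := LrowS N μ V hTop ⟨m, by omega⟩ (by simpa using h1)
    rw [hVv, hv] at this
    simpa using this.symm
  have hk := key μ N hμ V hTop hrec
  set C : ℝ := (-1:ℝ)^N * V N with hC
  have hVk : ∀ k, k ≤ N+1 → V k = (-1:ℝ)^k * (C * tseq μ N k) := by
    intro k hkk
    have h := hk k hkk
    have hsq : (-1:ℝ)^k * (-1:ℝ)^k = 1 := by
      rw [← mul_pow]; norm_num
    calc V k = ((-1:ℝ)^k * (-1:ℝ)^k) * V k := by rw [hsq, one_mul]
    _ = (-1:ℝ)^k * ((-1:ℝ)^k * V k) := by ring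
    _ = (-1:ℝ)^k * (C * tseq μ N k) := by rw [h]
  have hrow0 := Lrow0 N μ V
  rw [hVv, hv] at hrow0
  have hsum : ∑ k ∈ Finset.range (N+1), 2*(-1:ℝ)^k * V k
      = C * (2 * ∑ k ∈ Finset.range (N+1), tseq μ N k) := by
    rw [Finset.mul_sum, Finset.mul_sum]
    apply Finset.sum_congr rfl
    intro k hkmem
    rw [Finset.mem_range] at hkmem
    rw [hVk k (by omega)]
    have hsq : (-1:ℝ)^k * (-1:ℝ)^k = 1 := by rw [← mul_pow]; norm_num
    calc 2*(-1:ℝ)^k * ((-1:ℝ)^k * (C * tseq μ N k))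
        = ((-1:ℝ)^k * (-1:ℝ)^k) * (2 * (C * tseq μ N k)) := by ring
      _ = 2 * (C * tseq μ N k) := by rw [hsq]; ring
      _ = C * (2 * tseq μ N k) := by ring
  have hV0 : V 0 = C * tseq μ N 0 := by
    have := hVk 0 (by omega)
    simpa using this
  have hfac : (0:ℝ) = C * (2 * ∑ k ∈ Finset.range (N+1), tseq μ N k - tseq μ N 0) := by
    have h0 : (0:ℝ) = ∑ k ∈ Finset.range (N+1), 2*(-1:ℝ)^k * V k - V 0 := by
      rw [← hrow0]; simp
    rw [hsum, hV0] at h0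
    rw [h0]; ring
  have hpos : 0 < 2 * ∑ k ∈ Finset.range (N+1), tseq μ N k - tseq μ N 0 := by
    have hle : tseq μ N 0 ≤ ∑ k ∈ Finset.range (N+1), tseq μ N k := by
      apply Finset.single_le_sum (f := fun k => tseq μ N k)
      · intro k _; exact tseq_nonneg μ N hμ k
      · simp
    have h0 := tseq_zero_pos μ N hμ
    linarith
  have hC0 : C = 0 := by
    rcases mul_eq_zero.1 hfac.symm with h | h
    · exact h
    · exact absurd h (ne_of_gt hpos)
  funext j
  have := hVk (j:ℕ) (by omega)
  rw [hC0] at this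
  have hVj : V (j:ℕ) = 0 := by rw [this]; ring
  have : v j = V (j:ℕ) := by rw [← hVv]
  rw [this, hVj]; rfl

lemma T_ker (μ : ℝ) (N : ℕ) (hμ : 0 < μ) (w : Fin N → ℝ)
    (hw : Tmat N μ *ᵥ w = 0) : w = 0 := by
  set W : ℕ → ℝ := fun k => if h : 1 ≤ k ∧ k ≤ N then w ⟨k-1, by omega⟩ else 0 with hWdef
  have hWw : (fun j : Fin N => W ((j:ℕ)+1)) = w := by
    funext j
    have hj : 1 ≤ (j:ℕ)+1 ∧ (j:ℕ)+1 ≤ N := ⟨by omega, j.isLt⟩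
    simp only [hWdef]
    rw [dif_pos hj]
    exact congrArg w (Fin.ext (by simp))
  have hTop : W (N+1) = 0 := by
    simp only [hWdef]
    rw [dif_neg (by omega)]
  have hBot : W 0 = 0 := by
    simp only [hWdef]
    rw [dif_neg (by omega)]
  have hrec : ∀ m, 1 ≤ m → m ≤ N → μ * W (m-1) + 2*(m:ℝ)*W m - μ*W (m+1) = 0 := by
    intro m h1 h2
    obtain ⟨p, hp⟩ : ∃ p, m = p + 1 := ⟨m-1, by omega⟩
    have := Trow N μ W hTop hBot ⟨p, by omega⟩
    rw [hWw, hw] at this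
    subst hp
    simp only [Nat.add_sub_cancel]
    have h0 : (0:ℝ) = μ * W p + 2*(((p:ℕ):ℝ)+1) * W (p+1) - μ * W (p+2) := by
      rw [← this]; rfl
    push_cast
    linarith [h0]
  have hk := key μ N hμ W hTop hrec
  set C : ℝ := (-1:ℝ)^N * W N with hC
  have h0 := hk 0 (by omega)
  simp only [pow_zero, one_mul, hBot] at h0
  have hC0 : C = 0 := by
    rcases mul_eq_zero.1 h0.symm with h | h
    · exact h
    · exact absurd h (ne_of_gt (tseq_zero_pos μ N hμ))
  funext j
  have hj := hk ((j:ℕ)+1) (by omega)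
  rw [hC0, zero_mul] at hj
  have hWj : W ((j:ℕ)+1) = 0 := by
    have hsq : (-1:ℝ)^((j:ℕ)+1) ≠ 0 := by
      apply pow_ne_zero; norm_num
    exact (mul_eq_zero.1 hj).resolve_left hsq
  have : w j = W ((j:ℕ)+1) := by rw [← hWw]
  rw [this, hWj]; rfl

end aux14

/-- `L^{(N)}_μ` is invertible, the first column of its inverse has `ℓ¹` norm `1`, and
`‖(L^{(N)}_μ)⁻¹‖_{B(ℓ¹)} ≤ max{2‖T_N(μ)⁻¹‖₁, 1}`. -/
theorem stmt14 (μ : ℝ) (hμ : 0 < μ) (N : ℕ) (hN : 1 ≤ N) :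
    IsUnit (Lmat N μ) ∧
    vecl1 (fun i => (Lmat N μ)⁻¹ i 0) = 1 ∧
    matBl1 ((Lmat N μ)⁻¹) ≤ max (2 * mat1norm ((Tmat N μ)⁻¹)) 1 := by
  have hμ' : μ ≠ 0 := ne_of_gt hμ
  haveI : Nonempty (Fin N) := ⟨⟨0, by omega⟩⟩
  -- invertibility of L and T
  have hLdet : IsUnit (Lmat N μ).det := by
    apply isUnit_iff_ne_zero.2
    intro hd
    obtain ⟨v, hv0, hvz⟩ := (Matrix.exists_mulVec_eq_zero_iff).2 hd
    exact hv0 (aux14.L_ker μ N hμ v hvz)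
  have hLunit : IsUnit (Lmat N μ) := (Matrix.isUnit_iff_isUnit_det _).2 hLdet
  have hTdet : IsUnit (Tmat N μ).det := by
    apply isUnit_iff_ne_zero.2
    intro hd
    obtain ⟨w, hw0, hwz⟩ := (Matrix.exists_mulVec_eq_zero_iff).2 hd
    exact hw0 (aux14.T_ker μ N hμ w hwz)
  -- extracting a column of the inverse
  have colinv : ∀ (jc : Fin (N+1)) (X : Fin (N+1) → ℝ),
      Lmat N μ *ᵥ X = Pi.single jc 1 → ∀ i, (Lmat N μ)⁻¹ i jc = X i := by
    intro jc X hX i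
    have h1 : (Lmat N μ)⁻¹ *ᵥ (Lmat N μ *ᵥ X) = X := by
      rw [Matrix.mulVec_mulVec, Matrix.nonsing_inv_mul _ hLdet, Matrix.one_mulVec]
    rw [hX] at h1
    have h2 : ((Lmat N μ)⁻¹ *ᵥ Pi.single jc 1) i = (Lmat N μ)⁻¹ i jc := by
      simp [Matrix.mulVec, dotProduct, Pi.single_apply]
    rw [← h2, h1]
  -- abbreviations for the sequence
  set t : ℕ → ℝ := aux14_tseq μ N with ht
  have ht0 : 0 < t 0 := aux14.tseq_zero_pos μ N hμ
  have ht0' : t 0 ≠ 0 := ne_of_gt ht0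
  have htnn : ∀ k, 0 ≤ t k := aux14.tseq_nonneg μ N hμ
  have httop : t (N+1) = 0 := aux14.tseq_top μ N
  set Sig : ℝ := ∑ k ∈ Finset.range N, t (k+1) with hSig
  have hSignn : 0 ≤ Sig := Finset.sum_nonneg fun k _ => htnn (k+1)
  have hDpos : 0 < t 0 + 2 * Sig := by linarith
  set c : ℝ := (t 0 + 2 * Sig)⁻¹ with hc
  have hcpos : 0 < c := inv_pos.2 hDpos
  have hcD : c * (t 0 + 2 * Sig) = 1 := inv_mul_cancel₀ (ne_of_gt hDpos)
  -- column 0 of the inverse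
  set V0 : ℕ → ℝ := fun k => c * ((-1:ℝ)^k * t k) with hV0
  have hV0top : V0 (N+1) = 0 := by rw [hV0]; simp [httop]
  have hsumt : ∑ k ∈ Finset.range (N+1), t k = Sig + t 0 :=
    Finset.sum_range_succ' (fun k => t k) N
  have hL0 : Lmat N μ *ᵥ (fun j : Fin (N+1) => V0 (j:ℕ)) = Pi.single 0 1 := by
    funext i
    by_cases hi : (i:ℕ) = 0
    · have hi' : i = 0 := Fin.ext hi
      rw [hi', aux14.Lrow0]
      have hcong : ∀ k ∈ Finset.range (N+1), 2*(-1:ℝ)^k * V0 k = 2*c * t k := by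
        intro k _
        have hsq : (-1:ℝ)^k * (-1:ℝ)^k = 1 := by rw [← mul_pow]; norm_num
        calc 2*(-1:ℝ)^k * (c * ((-1:ℝ)^k * t k))
            = ((-1:ℝ)^k * (-1:ℝ)^k) * (2*c * t k) := by ring
          _ = 2*c * t k := by rw [hsq, one_mul]
      rw [Finset.sum_congr rfl hcong, ← Finset.mul_sum, hsumt]
      have hV00 : V0 0 = c * t 0 := by rw [hV0]; simp
      rw [hV00, Pi.single_eq_same]
      linear_combination hcD
    · obtain ⟨p, hp⟩ : ∃ p, (i:ℕ) = p+1 := ⟨(i:ℕ)-1, by omega⟩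
      have hpN : p + 1 ≤ N := by have := i.isLt; omega
      rw [aux14.LrowS N μ V0 hV0top i (by omega)]
      have htr := aux14.tseq_rec μ N hμ (p+1) (by omega) (by omega)
      simp only [Nat.add_sub_cancel] at htr
      rw [← ht] at htr
      push_cast at htr
      have hne : i ≠ 0 := fun h => hi (by rw [h]; rfl)
      rw [Pi.single_eq_of_ne hne, hp]
      simp only [Nat.add_sub_cancel, hV0]
      push_cast
      linear_combination (c * (-1:ℝ)^p) * htr
  have hcol0 : ∀ i, (Lmat N μ)⁻¹ i 0 = V0 (i:ℕ) := colinv 0 _ hL0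
  have habs : ∀ k, |V0 k| = c * t k := by
    intro k
    rw [hV0]
    rw [abs_mul, abs_mul, abs_pow, abs_neg, abs_one, one_pow, one_mul,
      abs_of_nonneg hcpos.le, abs_of_nonneg (htnn k)]
  have hvec : vecl1 (fun i => (Lmat N μ)⁻¹ i 0) = 1 := by
    unfold vecl1
    simp only [hcol0]
    have h1 : ∀ j : Fin N, |V0 ((j.succ : Fin (N+1)):ℕ)| = c * t ((j:ℕ)+1) := by
      intro j; rw [Fin.val_succ]; exact habs _
    rw [Finset.sum_congr rfl (fun j _ => h1 j),
      Fin.sum_univ_eq_sum_range (fun k => c * t (k+1)) N, ← Finset.mul_sum, ← hSig]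
    have h0 : ((0 : Fin (N+1)):ℕ) = 0 := rfl
    rw [h0, habs 0]
    linear_combination hcD
  -- columns of T⁻¹
  have hTcol : ∀ n : Fin N, Tmat N μ *ᵥ (fun i => (Tmat N μ)⁻¹ i n) = Pi.single n 1 := by
    intro n
    funext i
    have h1 : (Tmat N μ *ᵥ fun k => (Tmat N μ)⁻¹ k n) i = (Tmat N μ * (Tmat N μ)⁻¹) i n := by
      simp [Matrix.mulVec, dotProduct, Matrix.mul_apply]
    rw [h1, Matrix.mul_nonsing_inv _ hTdet, Matrix.one_apply, Pi.single_apply]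
  -- bound for the other columns
  have hcolbound : ∀ n : Fin N,
      (1/2) * |(Lmat N μ)⁻¹ 0 n.succ| + ∑ j : Fin N, |(Lmat N μ)⁻¹ j.succ n.succ|
        ≤ 2 * mat1norm ((Tmat N μ)⁻¹) := by
    intro n
    set z : Fin N → ℝ := fun i => (Tmat N μ)⁻¹ i n with hzdef
    have hzT : Tmat N μ *ᵥ z = Pi.single n 1 := hTcol n
    set Z : ℕ → ℝ := fun k => if h : 1 ≤ k ∧ k ≤ N then z ⟨k-1, by omega⟩ else 0 with hZ
    have hzZ : (fun j : Fin N => Z ((j:ℕ)+1)) = z := by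
      funext j
      have hj : 1 ≤ (j:ℕ)+1 ∧ (j:ℕ)+1 ≤ N := ⟨by omega, j.isLt⟩
      simp only [hZ]
      rw [dif_pos hj]
      exact congrArg z (Fin.ext (by simp))
    have hZtop : Z (N+1) = 0 := by simp only [hZ]; rw [dif_neg (by omega)]
    have hZbot : Z 0 = 0 := by simp only [hZ]; rw [dif_neg (by omega)]
    set S : ℝ := ∑ k ∈ Finset.range N, (-1:ℝ)^(k+1) * Z (k+1) with hS
    set α : ℝ := -2 * (c * t 0) * S with hα
    set V1 : ℕ → ℝ := fun k => Z k + (α / t 0) * ((-1:ℝ)^k * t k) with hV1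
    have hV1top : V1 (N+1) = 0 := by rw [hV1]; simp [hZtop, httop]
    have hV10 : V1 0 = α := by
      rw [hV1]
      simp only [pow_zero, one_mul, hZbot, zero_add]
      field_simp
    have hαt : α / t 0 = -2 * c * S := by rw [hα]; field_simp
    have hL1 : Lmat N μ *ᵥ (fun j : Fin (N+1) => V1 (j:ℕ)) = Pi.single n.succ 1 := by
      funext i
      by_cases hi : (i:ℕ) = 0
      · have hi' : i = 0 := Fin.ext hi
        rw [hi', aux14.Lrow0]
        have hcong : ∀ k ∈ Finset.range (N+1),
            2*(-1:ℝ)^k * V1 k = 2*(-1:ℝ)^k * Z k + (α / t 0) * (2 * t k) := by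
          intro k _
          have hsq : (-1:ℝ)^k * (-1:ℝ)^k = 1 := by rw [← mul_pow]; norm_num
          calc 2*(-1:ℝ)^k * (Z k + (α / t 0) * ((-1:ℝ)^k * t k))
              = 2*(-1:ℝ)^k * Z k + ((-1:ℝ)^k * (-1:ℝ)^k) * ((α / t 0) * (2 * t k)) := by ring
            _ = 2*(-1:ℝ)^k * Z k + (α / t 0) * (2 * t k) := by rw [hsq, one_mul]
        rw [Finset.sum_congr rfl hcong, Finset.sum_add_distrib, ← Finset.mul_sum,
          ← Finset.mul_sum, hsumt]
        have hsZ : ∑ k ∈ Finset.range (N+1), 2*(-1:ℝ)^k * Z k = 2 * S := by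
          rw [Finset.sum_range_succ' (fun k => 2*(-1:ℝ)^k * Z k) N, hZbot, hS,
            Finset.mul_sum]
          simp only [mul_zero, add_zero]
          apply Finset.sum_congr rfl
          intro k _
          ring
        rw [hsZ, hαt, hV10]
        have hsingle : (Pi.single (Fin.succ n) (1:ℝ) : Fin (N+1) → ℝ) 0 = 0 := by
          rw [Pi.single_apply, if_neg (Ne.symm (Fin.succ_ne_zero n))]
        rw [hsingle, hα]
        linear_combination (-2*S) * hcD
      · obtain ⟨p, hp⟩ : ∃ p, (i:ℕ) = p+1 := ⟨(i:ℕ)-1, by omega⟩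
        have hpN : p < N := by have := i.isLt; omega
        rw [aux14.LrowS N μ V1 hV1top i (by omega)]
        have htr := aux14.tseq_rec μ N hμ (p+1) (by omega) (by omega)
        simp only [Nat.add_sub_cancel] at htr
        rw [← ht] at htr
        push_cast at htr
        have hTrow := aux14.Trow N μ Z hZtop hZbot ⟨p, hpN⟩
        rw [hzZ, hzT] at hTrow
        have hval : ((⟨p, hpN⟩ : Fin N) : ℕ) = p := rfl
        rw [hval] at hTrow
        push_cast at hTrow
        have hsingle : (Pi.single (Fin.succ n) (1:ℝ) : Fin (N+1) → ℝ) i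
            = (Pi.single n (1:ℝ) : Fin N → ℝ) ⟨p, hpN⟩ := by
          simp only [Pi.single_apply]
          refine if_congr ?_ rfl rfl
          rw [Fin.ext_iff, Fin.ext_iff, Fin.val_succ, hp]
          omega
        rw [hsingle, hp]
        simp only [Nat.add_sub_cancel, hV1]
        push_cast
        linear_combination ((α / t 0) * (-1:ℝ)^p) * htr - hTrow
    have hcoln : ∀ i, (Lmat N μ)⁻¹ i n.succ = V1 (i:ℕ) := colinv n.succ _ hL1
    set K : ℝ := ∑ k ∈ Finset.range N, |Z (k+1)| with hK
    have hKnn : 0 ≤ K := Finset.sum_nonneg fun k _ => abs_nonneg _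
    have hSK : |S| ≤ K := by
      rw [hS]
      refine (Finset.abs_sum_le_sum_abs _ _).trans ?_
      rw [hK]
      apply Finset.sum_le_sum
      intro k _
      rw [abs_mul, abs_pow, abs_neg, abs_one, one_pow, one_mul]
    have hαabs : |α| = 2 * (c * t 0) * |S| := by
      rw [hα, abs_mul, abs_mul, abs_mul]
      rw [abs_of_nonneg hcpos.le, abs_of_nonneg ht0.le]
      norm_num
    have hαK : |α| ≤ 2 * (c * t 0) * K := by
      rw [hαabs]
      have h2 : 0 ≤ 2 * (c * t 0) := by positivity
      exact mul_le_mul_of_nonneg_left hSK h2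
    have hV1e : ∀ k, |V1 k| ≤ |Z k| + (|α| / t 0) * t k := by
      intro k
      rw [hV1]
      refine (abs_add_le _ _).trans ?_
      have heq : |(α / t 0)*((-1:ℝ)^k * t k)| = (|α| / t 0) * t k := by
        rw [aux14.absmulpow (α / t 0) (t k) (htnn k) k, abs_div, abs_of_nonneg ht0.le]
      rw [heq]
    have hKnorm : K ≤ mat1norm ((Tmat N μ)⁻¹) := by
      have hKz : K = ∑ i : Fin N, |(Tmat N μ)⁻¹ i n| := by
        rw [hK, ← Fin.sum_univ_eq_sum_range (fun k => |Z (k+1)|) N]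
        apply Finset.sum_congr rfl
        intro j _
        rw [show Z ((j:ℕ)+1) = z j from congrFun hzZ j]
      rw [hKz]
      have hbdd : BddAbove (Set.range (fun l : Fin N => ∑ i : Fin N, |(Tmat N μ)⁻¹ i l|)) :=
        Set.Finite.bddAbove (Set.finite_range _)
      exact le_ciSup hbdd n
    -- put the pieces together
    have e0 : ((0 : Fin (N+1)):ℕ) = 0 := rfl
    have hsum1 : ∑ j : Fin N, |(Lmat N μ)⁻¹ j.succ n.succ| ≤ K + (|α| / t 0) * Sig := by
      have hc1 : ∀ j : Fin N, |(Lmat N μ)⁻¹ j.succ n.succ| = |V1 ((j:ℕ)+1)| := by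
        intro j
        rw [hcoln j.succ, Fin.val_succ]
      rw [Finset.sum_congr rfl (fun j _ => hc1 j)]
      calc ∑ j : Fin N, |V1 ((j:ℕ)+1)|
          ≤ ∑ j : Fin N, (|Z ((j:ℕ)+1)| + (|α| / t 0) * t ((j:ℕ)+1)) :=
            Finset.sum_le_sum (fun j _ => hV1e _)
        _ = K + (|α| / t 0) * Sig := by
            rw [Finset.sum_add_distrib,
              Fin.sum_univ_eq_sum_range (fun k => |Z (k+1)|) N,
              Fin.sum_univ_eq_sum_range (fun k => (|α| / t 0) * t (k+1)) N,
              ← Finset.mul_sum, ← hK, ← hSig]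
    have h00 : |(Lmat N μ)⁻¹ 0 n.succ| = |α| := by
      rw [hcoln 0, e0, hV10]
    have hdivt : (|α| / t 0) * Sig ≤ 2 * c * K * Sig := by
      apply mul_le_mul_of_nonneg_right _ hSignn
      rw [div_le_iff₀ ht0]
      calc |α| ≤ 2 * (c * t 0) * K := hαK
        _ = 2 * c * K * t 0 := by ring
    have hfin : c * t 0 * K + K + 2 * c * K * Sig = 2 * K := by
      linear_combination K * hcD
    rw [h00]
    have hhalf : (1/2) * |α| ≤ c * t 0 * K := by
      rw [hαabs]
      have := mul_le_mul_of_nonneg_left hSK (show (0:ℝ) ≤ c * t 0 by positivity)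
      linarith
    calc (1/2) * |α| + ∑ j : Fin N, |(Lmat N μ)⁻¹ j.succ n.succ|
        ≤ c * t 0 * K + (K + (|α| / t 0) * Sig) := add_le_add hhalf hsum1
      _ ≤ c * t 0 * K + (K + 2 * c * K * Sig) := by linarith [hdivt]
      _ = 2 * K := by linarith [hfin]
      _ ≤ 2 * mat1norm ((Tmat N μ)⁻¹) := by linarith [hKnorm]
  refine ⟨hLunit, hvec, ?_⟩
  unfold matBl1
  apply max_le
  · have heq : |(Lmat N μ)⁻¹ 0 0| + 2 * ∑ j : Fin N, |(Lmat N μ)⁻¹ j.succ 0|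
        = vecl1 (fun i => (Lmat N μ)⁻¹ i 0) := rfl
    rw [heq, hvec]
    exact le_max_right _ _
  · exact ciSup_le fun n => le_trans (hcolbound n) (le_max_left _ _)
end
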